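/- arXiv:2303.03900 — 4 statements merged into one kernel-verified Lean document; each statement's English description precedes it below -/
import Mathlib

section
/- Fix ε ≥ 0. Suppose: for every θ ∈ Θ the map z ↦ ℓ(θ, z) is upper semicontinuous and P̂-integrable; c is lower semicontinuous on 𝒵 × 𝒵; there exist ẑ₀ ∈ 𝒵 and C < ∞ with ∫ c(z, ẑ₀) dP̂(z) ≤ C; there exist a metric d on 𝒵 with compact sublevel sets {z ∈ 𝒵 : d(z, ẑ) ≤ r} and p ∈ ℕ with c(z, ẑ) ≥ d(z, ẑ)^p for all z, ẑ ∈ 𝒵; and for every θ ∈ Θ there exist g > 0, ẑ₀ ∈ 𝒵 and r ∈ (0, p) with ℓ(θ, z) ≤ g(1 + d(z, ẑ₀)^r) for all z ∈ 𝒵. Then for every θ ∈ Θ the map Q ↦ ∫ ℓ(θ, z) dQ(z) is upper semicontinuous on B_ε(P̂) with respect to the topology of weak convergence. -/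
open MeasureTheory ENNReal Set Filter Topology
open scoped NNReal BoundedContinuousFunction

set_option maxHeartbeats 1600000

noncomputable section

/-- The set of couplings of two measures. -/
def couplings {α : Type*} [MeasurableSpace α] (Q P : Measure α) : Set (Measure (α × α)) :=
  {π | π.map Prod.fst = Q ∧ π.map Prod.snd = P}

/-- The optimal transport discrepancy `d_c(Q, P) = inf_π ∫ c dπ`. -/
def OTDiscrepancy {α : Type*} [MeasurableSpace α] (c : α → α → ℝ≥0∞) (Q P : Measure α) :
    ℝ≥0∞ :=
  ⨅ π ∈ couplings Q P, ∫⁻ p, c p.1 p.2 ∂π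

/-- The optimal transport ambiguity set `B_ε(P) = {Q : d_c(Q, P) ≤ ε}`. -/
def ambiguitySet {α : Type*} [MeasurableSpace α] (c : α → α → ℝ≥0∞)
    (P : ProbabilityMeasure α) (ε : ℝ) : Set (ProbabilityMeasure α) :=
  {Q | OTDiscrepancy c Q.toMeasure P.toMeasure ≤ ENNReal.ofReal ε}

/-- The `[0,∞]`-valued positive part of an extended real number. -/
def erealPos (x : EReal) : ℝ≥0∞ := if x = ⊤ then ⊤ else ENNReal.ofReal x.toReal

/-- The `(−∞,∞]`-valued integral of a `(−∞,∞]`-valued function. -/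
def eint {α : Type*} [MeasurableSpace α] (μ : Measure α) (f : α → EReal) : EReal :=
  ((∫⁻ a, erealPos (f a) ∂μ : ℝ≥0∞) : EReal) - ((∫⁻ a, erealPos (-(f a)) ∂μ : ℝ≥0∞) : EReal)

/-! Auxiliary lemmas -/

lemma erealPos_coe (x : ℝ) : erealPos (x : EReal) = ENNReal.ofReal x := by
  simp [erealPos]

lemma ennreal_toEReal_eq (x : ℝ≥0∞) (hx : x ≠ ⊤) : (x : EReal) = ((x.toReal : ℝ) : EReal) := by
  lift x to ℝ≥0 using hx
  norm_cast

lemma ereal_coe_sub_top (x : EReal) : x - (⊤ : EReal) = ⊥ := by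
  rw [sub_eq_add_neg, EReal.neg_top, EReal.add_bot]

lemma ofReal_max_zero' (a : ℝ) : ENNReal.ofReal (max a 0) = ENNReal.ofReal a := by
  rcases le_total a 0 with h | h
  · rw [max_eq_right h, ENNReal.ofReal_zero, eq_comm, ENNReal.ofReal_eq_zero]; exact h
  · rw [max_eq_left h]

lemma tri_pow (p : ℕ) (a b c e : ℝ) (ha : 0 ≤ a) (hb : 0 ≤ b) (hc : 0 ≤ c) (he : 0 ≤ e)
    (h : a ≤ b + c + e) : a ^ p ≤ 3 ^ p * (b ^ p + c ^ p + e ^ p) := by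
  set m := max b (max c e) with hm
  have hmb : b ≤ m := le_max_left _ _
  have hmc : c ≤ m := (le_max_left _ _).trans (le_max_right _ _)
  have hme : e ≤ m := (le_max_right _ _).trans (le_max_right _ _)
  have h3m : a ≤ 3 * m := by linarith
  have h1 : a ^ p ≤ (3 * m) ^ p := pow_le_pow_left₀ ha h3m p
  have h2 : (3 * m) ^ p = 3 ^ p * m ^ p := mul_pow 3 m p
  have hmp : m ^ p ≤ b ^ p + c ^ p + e ^ p := by
    have : m = b ∨ m = c ∨ m = e := by
      rcases max_choice b (max c e) with h' | h'
      · exact Or.inl h'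
      · rcases max_choice c e with h'' | h''
        · exact Or.inr (Or.inl (h'.trans h''))
        · exact Or.inr (Or.inr (h'.trans h''))
    have hbp : 0 ≤ b ^ p := pow_nonneg hb p
    have hcp : 0 ≤ c ^ p := pow_nonneg hc p
    have hep : 0 ≤ e ^ p := pow_nonneg he p
    rcases this with h' | h' | h' <;> rw [h'] <;> linarith
  calc a ^ p ≤ (3 * m) ^ p := h1
    _ = 3 ^ p * m ^ p := h2
    _ ≤ 3 ^ p * (b ^ p + c ^ p + e ^ p) := by
        have : (0:ℝ) ≤ 3 ^ p := by positivity
        nlinarith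

section LSC
variable {Ω : Type*} [MeasurableSpace Ω] [MetricSpace Ω] [OpensMeasurableSpace Ω] [Nonempty Ω]

/-- Moreau–Yosida approximation. -/
lemma moreau_yosida (ψ : Ω → ℝ) (hψ : LowerSemicontinuous ψ) (hψ0 : ∀ x, 0 ≤ ψ x) :
    ∃ h : ℕ → Ω → ℝ,
      (∀ k x, 0 ≤ h k x) ∧ (∀ k x, h k x ≤ k) ∧ (∀ k, Continuous (h k)) ∧
      (Monotone h) ∧ (∀ x, (⨆ k, ENNReal.ofReal (h k x)) = ENNReal.ofReal (ψ x)) := by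
  have term_nonneg : ∀ (k : ℕ) (x y : Ω), (0:ℝ) ≤ min (ψ y) k + k * dist x y := by
    intro k x y
    have h1 : (0:ℝ) ≤ min (ψ y) k := le_min (hψ0 y) (Nat.cast_nonneg k)
    have h2 : (0:ℝ) ≤ (k:ℝ) * dist x y := mul_nonneg (Nat.cast_nonneg k) dist_nonneg
    linarith
  set h : ℕ → Ω → ℝ := fun k x => ⨅ y : Ω, (min (ψ y) k + k * dist x y) with hh
  have hbdd : ∀ (k : ℕ) (x : Ω),
      BddBelow (range fun y : Ω => min (ψ y) k + k * dist x y) := by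
    intro k x
    exact ⟨0, by rintro t ⟨y, rfl⟩; exact term_nonneg k x y⟩
  have h0 : ∀ k x, 0 ≤ h k x := fun k x => le_ciInf fun y => term_nonneg k x y
  have hle : ∀ k x, h k x ≤ min (ψ x) k := by
    intro k x
    have := ciInf_le (hbdd k x) x
    simpa [dist_self] using this
  have key : ∀ (k : ℕ) (x x' : Ω), h k x ≤ h k x' + k * dist x x' := by
    intro k x x'
    have step : ∀ y : Ω, h k x - k * dist x x' ≤ min (ψ y) k + k * dist x' y := by
      intro y
      have h1 : h k x ≤ min (ψ y) k + k * dist x y := ciInf_le (hbdd k x) y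
      have h2 : dist x y ≤ dist x x' + dist x' y := dist_triangle x x' y
      have h3 : (k:ℝ) * dist x y ≤ (k:ℝ) * (dist x x' + dist x' y) :=
        mul_le_mul_of_nonneg_left h2 (Nat.cast_nonneg k)
      nlinarith
    have := le_ciInf step
    linarith
  have hcont : ∀ k, Continuous (h k) := by
    intro k
    have : LipschitzWith (k : ℝ≥0) (h k) := by
      rw [lipschitzWith_iff_dist_le_mul]
      intro x x'
      rw [Real.dist_eq, abs_sub_le_iff]
      have k1 := key k x x'
      have k2 := key k x' x
      rw [dist_comm x' x] at k2
      constructor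
      · simpa [NNReal.coe_natCast] using by linarith
      · simpa [NNReal.coe_natCast] using by linarith
    exact this.continuous
  have hmono : Monotone h := by
    apply monotone_nat_of_le_succ
    intro k x
    refine le_ciInf fun y => ?_
    have h1 : h k x ≤ min (ψ y) k + k * dist x y := ciInf_le (hbdd k x) y
    have h2 : min (ψ y) (k:ℝ) ≤ min (ψ y) ((k:ℕ)+1 : ℕ) := by
      push_cast; exact min_le_min le_rfl (by linarith)
    have h3 : (k:ℝ) * dist x y ≤ (((k:ℕ)+1:ℕ):ℝ) * dist x y := by
      push_cast
      have := dist_nonneg (x := x) (y := y)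
      nlinarith
    linarith
  refine ⟨h, h0, fun k x => (hle k x).trans (min_le_right _ _), hcont, hmono, ?_⟩
  intro x
  have hmono' : Monotone fun k => h k x := fun a b hab => hmono hab x
  have hbd : BddAbove (range fun k => h k x) :=
    ⟨ψ x, by rintro t ⟨k, rfl⟩; exact (hle k x).trans (min_le_left _ _)⟩
  have hsup_le : (⨆ k, h k x) ≤ ψ x := ciSup_le fun k => (hle k x).trans (min_le_left _ _)
  have claim : ∀ c : ℝ, 0 ≤ c → c < ψ x → c ≤ ⨆ k, h k x := by
    intro c hc0 hc
    obtain ⟨η, hη, hball⟩ := Metric.eventually_nhds_iff.mp (hψ x c hc)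
    obtain ⟨k, hk1, hk2⟩ : ∃ k : ℕ, c ≤ k ∧ c / η ≤ k := by
      obtain ⟨k, hk⟩ := exists_nat_ge (max c (c / η))
      exact ⟨k, (le_max_left _ _).trans hk, (le_max_right _ _).trans hk⟩
    have hck : c ≤ h k x := by
      refine le_ciInf fun y => ?_
      rcases lt_or_ge (dist x y) η with hd | hd
      · have hy : c < ψ y := hball (by rwa [dist_comm])
        have h1 : c ≤ min (ψ y) k := le_min hy.le hk1
        have h2 : (0:ℝ) ≤ (k:ℝ) * dist x y := mul_nonneg (Nat.cast_nonneg k) dist_nonneg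
        linarith
      · have h1 : c ≤ (k:ℝ) * dist x y := by
          calc c = (c / η) * η := by field_simp
            _ ≤ (k:ℝ) * η := mul_le_mul_of_nonneg_right hk2 hη.le
            _ ≤ (k:ℝ) * dist x y := mul_le_mul_of_nonneg_left hd (Nat.cast_nonneg k)
        have h2 : (0:ℝ) ≤ min (ψ y) k := le_min (hψ0 y) (Nat.cast_nonneg k)
        linarith
    exact hck.trans (le_ciSup hbd k)
  have hle_sup : ψ x ≤ ⨆ k, h k x := by
    refine le_of_forall_lt fun c hc => ?_
    rcases lt_or_ge c 0 with hc0 | hc0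
    · exact hc0.trans_le ((h0 0 x).trans (le_ciSup hbd 0))
    · obtain ⟨c', hcc', hc'⟩ := exists_between hc
      exact lt_of_lt_of_le hcc' (claim c' (hc0.trans hcc'.le) hc')
  have hx : (⨆ k, h k x) = ψ x := le_antisymm hsup_le hle_sup
  have htend : Tendsto (fun k => h k x) atTop (𝓝 (ψ x)) := by
    rw [← hx]; exact tendsto_atTop_ciSup hmono' hbd
  have htend2 : Tendsto (fun k => ENNReal.ofReal (h k x)) atTop (𝓝 (ENNReal.ofReal (ψ x))) :=
    (ENNReal.continuous_ofReal.tendsto _).comp htend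
  have hmono2 : Monotone fun k => ENNReal.ofReal (h k x) :=
    fun a b hab => ENNReal.ofReal_le_ofReal (hmono' hab)
  exact tendsto_nhds_unique (tendsto_atTop_iSup hmono2) htend2

/-- Lower semicontinuity of `Q ↦ ∫⁻ ψ dQ` for lsc nonneg real `ψ`. -/
lemma lsc_lintegral (ψ : Ω → ℝ) (hψ : LowerSemicontinuous ψ) (hψ0 : ∀ x, 0 ≤ ψ x) :
    LowerSemicontinuous
      (fun Q : ProbabilityMeasure Ω => ∫⁻ x, ENNReal.ofReal (ψ x) ∂(Q : Measure Ω)) := by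
  obtain ⟨h, h0, hk, hcont, hmono, hsup⟩ := moreau_yosida ψ hψ hψ0
  have key : (fun Q : ProbabilityMeasure Ω => ∫⁻ x, ENNReal.ofReal (ψ x) ∂(Q : Measure Ω))
      = fun Q : ProbabilityMeasure Ω =>
        ⨆ k, ∫⁻ x, ENNReal.ofReal (h k x) ∂(Q : Measure Ω) := by
    funext Q
    calc ∫⁻ x, ENNReal.ofReal (ψ x) ∂(Q : Measure Ω)
        = ∫⁻ x, ⨆ k, ENNReal.ofReal (h k x) ∂(Q : Measure Ω) :=
          lintegral_congr fun x => (hsup x).symm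
      _ = ⨆ k, ∫⁻ x, ENNReal.ofReal (h k x) ∂(Q : Measure Ω) :=
          lintegral_iSup (fun k => (hcont k).measurable.ennreal_ofReal)
            (fun a b hab x => ENNReal.ofReal_le_ofReal (hmono hab x))
  rw [key]
  refine lowerSemicontinuous_iSup fun k => ?_
  have hb : ∀ x y : Ω, dist (h k x) (h k y) ≤ (k : ℝ) := by
    intro x y
    rw [Real.dist_eq, abs_sub_le_iff]
    constructor
    · linarith [h0 k y, hk k x]
    · linarith [h0 k x, hk k y]
  set fk : Ω →ᵇ ℝ≥0 :=
    BoundedContinuousFunction.comp Real.toNNReal Real.lipschitzWith_toNNReal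
      (BoundedContinuousFunction.mkOfBound ⟨h k, hcont k⟩ (k : ℝ) hb) with hfk
  have heq : (fun Q : ProbabilityMeasure Ω => ∫⁻ x, ENNReal.ofReal (h k x) ∂(Q : Measure Ω))
      = fun Q : ProbabilityMeasure Ω => ((Q.toFiniteMeasure.testAgainstNN fk : ℝ≥0) : ℝ≥0∞) := by
    funext Q
    rw [FiniteMeasure.testAgainstNN_coe_eq]
    rfl
  rw [heq]
  exact (ENNReal.continuous_coe.comp
    (ProbabilityMeasure.continuous_testAgainstNN_eval fk)).lowerSemicontinuous

end LSC

/-- **Weak upper semicontinuity of the expected loss in the distribution.**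
Under upper semicontinuity and `P̂`-integrability of the loss, lower semicontinuity of the
transportation cost, a moment bound at a reference point, domination of the `p`-th power of
a metric with compact sublevel sets by the cost, and a sublinear (of order `r < p`) growth
condition on the loss, the map `Q ↦ ∫ ℓ(θ, z) dQ(z)` is upper semicontinuous on `B_ε(P̂)`
with respect to the topology of weak convergence. -/
theorem expectedLoss_upperSemicontinuousOn {d m : ℕ}
    (𝒵 : Set (Fin d → ℝ)) (h𝒵closed : IsClosed 𝒵) (h𝒵ne : 𝒵.Nonempty)
    (Θ : Set (Fin m → ℝ)) (hΘclosed : IsClosed Θ) (hΘne : Θ.Nonempty)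
    (c : 𝒵 → 𝒵 → ℝ≥0∞) (hc_id : ∀ z zhat : 𝒵, c z zhat = 0 ↔ z = zhat)
    (Phat : ProbabilityMeasure 𝒵)
    (ℓ : (Fin m → ℝ) → 𝒵 → EReal) (hℓbot : ∀ θ z, ℓ θ z ≠ ⊥)
    (ε : ℝ) (hε : 0 ≤ ε)
    -- the loss is upper semicontinuous and `P̂`-integrable in `z`
    (h_usc : ∀ θ ∈ Θ, UpperSemicontinuous (fun z : 𝒵 => ℓ θ z))
    (h_int : ∀ θ ∈ Θ, (∫⁻ z, erealPos (ℓ θ z) ∂Phat.toMeasure) ≠ ⊤ ∧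
      (∫⁻ z, erealPos (-(ℓ θ z)) ∂Phat.toMeasure) ≠ ⊤)
    -- the cost is lower semicontinuous
    (hc_lsc : LowerSemicontinuous (fun q : 𝒵 × 𝒵 => c q.1 q.2))
    -- moment bound at a reference point
    (zhat₀ : 𝒵) (C : ℝ) (hC : ∫⁻ z, c z zhat₀ ∂Phat.toMeasure ≤ ENNReal.ofReal C)
    -- a metric on `𝒵` with compact sublevel sets dominated by the cost
    (δ : 𝒵 → 𝒵 → ℝ)
    (hδ_id : ∀ z zhat : 𝒵, δ z zhat = 0 ↔ z = zhat)
    (hδ_symm : ∀ z zhat : 𝒵, δ z zhat = δ zhat z)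
    (hδ_tri : ∀ x y z : 𝒵, δ x z ≤ δ x y + δ y z)
    (hδ_cpt : ∀ (zhat : 𝒵) (r : ℝ), IsCompact {z : 𝒵 | δ z zhat ≤ r})
    (p : ℕ) (hp : 1 ≤ p)
    (hcδ : ∀ z zhat : 𝒵, ENNReal.ofReal (δ z zhat ^ p) ≤ c z zhat)
    -- growth condition of order `r < p` on the loss
    (h_growth : ∀ θ ∈ Θ, ∃ g : ℝ, 0 < g ∧ ∃ zhat₁ : 𝒵, ∃ r : ℝ, 0 < r ∧ r < (p : ℝ) ∧
      ∀ z : 𝒵, ℓ θ z ≤ ((g * (1 + δ z zhat₁ ^ r) : ℝ) : EReal)) :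
    ∀ θ ∈ Θ, UpperSemicontinuousOn
      (fun Q : ProbabilityMeasure 𝒵 => eint Q.toMeasure (ℓ θ))
      (ambiguitySet c Phat ε) := by
  intro θ hθ
  haveI : Nonempty 𝒵 := h𝒵ne.to_subtype
  obtain ⟨g, hg, zhat₁, r, hr0, hrp, hgrow⟩ := h_growth θ hθ
  -- basic facts about δ
  have hδ0 : ∀ z w : 𝒵, 0 ≤ δ z w := by
    intro z w
    have h1 : δ z z ≤ δ z w + δ w z := hδ_tri z w z
    rw [(hδ_id z z).mpr rfl, ← hδ_symm z w] at h1
    linarith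
  have hδlsc : ∀ w : 𝒵, LowerSemicontinuous (fun z : 𝒵 => δ z w) := by
    intro w
    rw [lowerSemicontinuous_iff_isClosed_preimage]
    intro y
    exact (hδ_cpt w y).isClosed
  have hδmeas : ∀ w : 𝒵, Measurable (fun z : 𝒵 => δ z w) := fun w => (hδlsc w).measurable
  -- the loss is real-valued
  set L : 𝒵 → ℝ := fun z => (ℓ θ z).toReal with hLdef
  have hltop : ∀ z, ℓ θ z ≠ ⊤ := fun z => ((hgrow z).trans_lt (EReal.coe_lt_top _)).ne
  have hLeq : ∀ z, ℓ θ z = ((L z : ℝ) : EReal) := fun z =>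
    (EReal.coe_toReal (hltop z) (hℓbot θ z)).symm
  have hLusc : UpperSemicontinuous L := by
    intro x y hy
    have : ℓ θ x < ((y : ℝ) : EReal) := by rw [hLeq x]; exact_mod_cast hy
    filter_upwards [h_usc θ hθ x _ this] with z hz
    rw [hLeq z] at hz
    exact_mod_cast hz
  have hLmeas : Measurable L := hLusc.measurable
  have hLle : ∀ z, L z ≤ g * (1 + δ z zhat₁ ^ r) := by
    intro z
    have := hgrow z
    rw [hLeq z] at this
    exact_mod_cast this
  -- the expected loss in terms of L
  have feq : ∀ Q : ProbabilityMeasure 𝒵, eint Q.toMeasure (ℓ θ) =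
      ((∫⁻ z, ENNReal.ofReal (L z) ∂Q.toMeasure : ℝ≥0∞) : EReal)
        - ((∫⁻ z, ENNReal.ofReal (-(L z)) ∂Q.toMeasure : ℝ≥0∞) : EReal) := by
    intro Q
    unfold eint
    congr 2
    · exact lintegral_congr fun z => by rw [hLeq z, erealPos_coe]
    · exact lintegral_congr fun z => by rw [hLeq z, ← EReal.coe_neg, erealPos_coe]
  -- p-th moment function
  set Dp : 𝒵 → ℝ≥0∞ := fun z => ENNReal.ofReal (δ z zhat₁ ^ p) with hDpdef
  have hDpmeas : Measurable Dp := ((hδmeas zhat₁).pow_const p).ennreal_ofReal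
  set K : ℝ≥0∞ := 3 ^ p * (ENNReal.ofReal ε + 1 + ENNReal.ofReal C
      + ENNReal.ofReal (δ zhat₀ zhat₁ ^ p)) with hKdef
  have hK : K ≠ ⊤ := by
    rw [hKdef]
    refine ENNReal.mul_ne_top (by simp) ?_
    simp [ENNReal.add_ne_top, ENNReal.ofReal_ne_top]
  -- uniform moment bound on the ambiguity set
  have momK : ∀ Q : ProbabilityMeasure 𝒵, Q ∈ ambiguitySet c Phat ε →
      ∫⁻ z, Dp z ∂Q.toMeasure ≤ K := by
    intro Q hQ
    have hQ' : OTDiscrepancy c Q.toMeasure Phat.toMeasure ≤ ENNReal.ofReal ε := hQ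
    have hlt : OTDiscrepancy c Q.toMeasure Phat.toMeasure < ENNReal.ofReal ε + 1 :=
      hQ'.trans_lt (ENNReal.lt_add_right ENNReal.ofReal_ne_top one_ne_zero)
    rw [OTDiscrepancy] at hlt
    rw [iInf_lt_iff] at hlt
    obtain ⟨π, hlt⟩ := hlt
    rw [iInf_lt_iff] at hlt
    obtain ⟨hπmem, hπc⟩ := hlt
    obtain ⟨hπ1, hπ2⟩ := hπmem
    have hcmeas : Measurable (fun q : 𝒵 × 𝒵 => c q.1 q.2) := hc_lsc.measurable
    have hsndmeas : Measurable (fun q : 𝒵 × 𝒵 => ENNReal.ofReal (δ q.2 zhat₀ ^ p)) :=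
      (((hδmeas zhat₀).pow_const p).ennreal_ofReal).comp measurable_snd
    have hpoint : ∀ q : 𝒵 × 𝒵, Dp q.1 ≤
        3 ^ p * (c q.1 q.2 + ENNReal.ofReal (δ q.2 zhat₀ ^ p)
          + ENNReal.ofReal (δ zhat₀ zhat₁ ^ p)) := by
      intro q
      have htri : δ q.1 zhat₁ ≤ δ q.1 q.2 + δ q.2 zhat₀ + δ zhat₀ zhat₁ := by
        have h1 := hδ_tri q.1 q.2 zhat₁
        have h2 := hδ_tri q.2 zhat₀ zhat₁
        linarith
      have hr : (δ q.1 zhat₁) ^ p ≤ 3 ^ p * ((δ q.1 q.2) ^ p + (δ q.2 zhat₀) ^ p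
          + (δ zhat₀ zhat₁) ^ p) :=
        tri_pow p _ _ _ _ (hδ0 _ _) (hδ0 _ _) (hδ0 _ _) (hδ0 _ _) htri
      have h3 : Dp q.1 ≤ ENNReal.ofReal (3 ^ p * ((δ q.1 q.2) ^ p + (δ q.2 zhat₀) ^ p
          + (δ zhat₀ zhat₁) ^ p)) := ENNReal.ofReal_le_ofReal hr
      refine h3.trans ?_
      have hδp : ∀ x y : 𝒵, (0:ℝ) ≤ δ x y ^ p := fun x y => pow_nonneg (hδ0 x y) p
      rw [ENNReal.ofReal_mul (by positivity),
        ENNReal.ofReal_add (add_nonneg (hδp _ _) (hδp _ _)) (hδp _ _),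
        ENNReal.ofReal_add (hδp _ _) (hδp _ _), ENNReal.ofReal_pow (by norm_num)]
      have h30 : ENNReal.ofReal (3:ℝ) = (3 : ℝ≥0∞) := by
        rw [ENNReal.ofReal_ofNat]
      rw [h30]
      gcongr
      exact hcδ q.1 q.2
    calc ∫⁻ z, Dp z ∂Q.toMeasure = ∫⁻ q, Dp q.1 ∂π := by
          rw [← hπ1, lintegral_map hDpmeas measurable_fst]
      _ ≤ ∫⁻ q, 3 ^ p * (c q.1 q.2 + ENNReal.ofReal (δ q.2 zhat₀ ^ p)
            + ENNReal.ofReal (δ zhat₀ zhat₁ ^ p)) ∂π := lintegral_mono hpoint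
      _ = 3 ^ p * ((∫⁻ q, c q.1 q.2 ∂π + ∫⁻ q, ENNReal.ofReal (δ q.2 zhat₀ ^ p) ∂π)
            + ENNReal.ofReal (δ zhat₀ zhat₁ ^ p) * π Set.univ) := by
          rw [lintegral_const_mul _ (f := fun q : 𝒵 × 𝒵 =>
              c q.1 q.2 + ENNReal.ofReal (δ q.2 zhat₀ ^ p) + ENNReal.ofReal (δ zhat₀ zhat₁ ^ p))
              ((hcmeas.add hsndmeas).add measurable_const),
            lintegral_add_right _ measurable_const, lintegral_add_left hcmeas,
            lintegral_const]
      _ ≤ 3 ^ p * (((ENNReal.ofReal ε + 1) + ENNReal.ofReal C)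
            + ENNReal.ofReal (δ zhat₀ zhat₁ ^ p)) := by
          have hπuniv : π Set.univ ≤ 1 := by
            have h1 := congrArg (fun μ : Measure 𝒵 => μ Set.univ) hπ1
            simp only [Measure.map_apply measurable_fst MeasurableSet.univ,
              Set.preimage_univ] at h1
            rw [h1]
            simp
          have hc2 : ∫⁻ q, ENNReal.ofReal (δ q.2 zhat₀ ^ p) ∂π ≤ ENNReal.ofReal C := by
            calc ∫⁻ q, ENNReal.ofReal (δ q.2 zhat₀ ^ p) ∂π
                = ∫⁻ z, ENNReal.ofReal (δ z zhat₀ ^ p) ∂Phat.toMeasure := by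
                  rw [← hπ2, lintegral_map ((hδmeas zhat₀).pow_const p).ennreal_ofReal
                    measurable_snd]
              _ ≤ ∫⁻ z, c z zhat₀ ∂Phat.toMeasure := lintegral_mono fun z => hcδ z zhat₀
              _ ≤ ENNReal.ofReal C := hC
          have hπc' := hπc.le
          have hmul : ENNReal.ofReal (δ zhat₀ zhat₁ ^ p) * π Set.univ
              ≤ ENNReal.ofReal (δ zhat₀ zhat₁ ^ p) :=
            le_trans (mul_le_mul_right hπuniv _) (mul_one _).le
          gcongr
      _ = K := by rw [hKdef]
  -- integrability of the positive part, uniformly on the ambiguity set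
  have hδrp : ∀ z : 𝒵, δ z zhat₁ ^ r ≤ 1 + δ z zhat₁ ^ p := by
    intro z
    rcases le_total (δ z zhat₁) 1 with h1 | h1
    · have := Real.rpow_le_one (hδ0 z zhat₁) h1 hr0.le
      have := pow_nonneg (hδ0 z zhat₁) p
      linarith
    · have h2 : δ z zhat₁ ^ r ≤ δ z zhat₁ ^ (p:ℝ) :=
        Real.rpow_le_rpow_of_exponent_le h1 hrp.le
      rw [Real.rpow_natCast] at h2
      linarith
  have hLbound : ∀ z, ENNReal.ofReal (L z) ≤ ENNReal.ofReal (2*g) + ENNReal.ofReal g * Dp z := by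
    intro z
    have h1 : L z ≤ 2*g + g * δ z zhat₁ ^ p := by
      have h2 := hLle z
      have h3 := hδrp z
      nlinarith
    calc ENNReal.ofReal (L z) ≤ ENNReal.ofReal (2*g + g * δ z zhat₁ ^ p) :=
          ENNReal.ofReal_le_ofReal h1
      _ = ENNReal.ofReal (2*g) + ENNReal.ofReal g * Dp z := by
          rw [ENNReal.ofReal_add (by positivity) (mul_nonneg hg.le (pow_nonneg (hδ0 _ _) p)),
            ENNReal.ofReal_mul hg.le]
  have hAfin : ∀ Q : ProbabilityMeasure 𝒵, Q ∈ ambiguitySet c Phat ε →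
      (∫⁻ z, ENNReal.ofReal (L z) ∂Q.toMeasure) ≠ ⊤ := by
    intro Q hQ
    have hle : ∫⁻ z, ENNReal.ofReal (L z) ∂Q.toMeasure
        ≤ ENNReal.ofReal (2*g) + ENNReal.ofReal g * K := by
      calc ∫⁻ z, ENNReal.ofReal (L z) ∂Q.toMeasure
          ≤ ∫⁻ z, (ENNReal.ofReal (2*g) + ENNReal.ofReal g * Dp z) ∂Q.toMeasure :=
            lintegral_mono hLbound
        _ = ENNReal.ofReal (2*g) * (Q.toMeasure Set.univ)
            + ENNReal.ofReal g * ∫⁻ z, Dp z ∂Q.toMeasure := by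
            rw [lintegral_add_left measurable_const, lintegral_const,
              lintegral_const_mul _ hDpmeas]
        _ ≤ ENNReal.ofReal (2*g) + ENNReal.ofReal g * K := by
            rw [measure_univ, mul_one]
            gcongr
            exact momK Q hQ
    exact ne_top_of_le_ne_top
      (ENNReal.add_ne_top.mpr ⟨ENNReal.ofReal_ne_top,
        ENNReal.mul_ne_top ENNReal.ofReal_ne_top hK⟩) hle
  -- start of the semicontinuity argument
  intro Q₀ hQ₀ y hy
  obtain ⟨y', hy'1, hy'2⟩ := EReal.exists_between_coe_real hy
  obtain ⟨y'', hy''1, hy''2⟩ := EReal.exists_between_coe_real hy'2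
  have hy'r : y' < y'' := by exact_mod_cast hy''1
  set η : ℝ := y'' - y' with hηdef
  have hη : 0 < η := by linarith
  -- choose the truncation level
  obtain ⟨t, ht1, hτη⟩ : ∃ t : ℝ, 1 ≤ t ∧ 2 * g * (K.toReal + 1) * t ^ (r - (p:ℝ)) < η := by
    have hneg : (0:ℝ) < (p:ℝ) - r := by linarith
    have htend : Tendsto (fun t : ℝ => 2 * g * (K.toReal + 1) * t ^ (r - (p:ℝ)))
        atTop (𝓝 (2 * g * (K.toReal + 1) * 0)) := by
      apply Filter.Tendsto.const_mul
      have := tendsto_rpow_neg_atTop hneg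
      simpa [neg_sub] using this
    rw [mul_zero] at htend
    have := (htend.eventually_lt_const hη).and (eventually_ge_atTop (1:ℝ))
    obtain ⟨t, h1, h2⟩ := this.exists
    exact ⟨t, h2, h1⟩
  have ht0 : (0:ℝ) < t := lt_of_lt_of_le one_pos ht1
  set τ : ℝ := 2 * g * (K.toReal + 1) * t ^ (r - (p:ℝ)) with hτdef
  have hτ0 : 0 ≤ τ := by
    have := Real.rpow_pos_of_pos ht0 (r - (p:ℝ))
    have hK0 : (0:ℝ) ≤ K.toReal := ENNReal.toReal_nonneg
    positivity
  set M : ℝ := g * (1 + t ^ r) with hMdef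
  have hM0 : 0 < M := by
    have := Real.rpow_pos_of_pos ht0 r
    positivity
  -- tail bound
  have hTailPoint : ∀ z : 𝒵, ENNReal.ofReal (L z - M)
      ≤ ENNReal.ofReal (2 * g * t ^ (r - (p:ℝ))) * Dp z := by
    intro z
    set D : ℝ := δ z zhat₁ with hDdef
    have hD0 : 0 ≤ D := hδ0 z zhat₁
    have key : L z - M ≤ (2 * g * t ^ (r - (p:ℝ))) * D ^ p := by
      rcases le_total D t with hDt | hDt
      · have h1 : D ^ r ≤ t ^ r := Real.rpow_le_rpow hD0 hDt hr0.le
        have h2 : L z ≤ M := by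
          have := hLle z
          rw [hMdef]
          nlinarith
        have h3 : (0:ℝ) ≤ (2 * g * t ^ (r - (p:ℝ))) * D ^ p := by
          have := Real.rpow_pos_of_pos ht0 (r - (p:ℝ))
          have := pow_nonneg hD0 p
          positivity
        linarith
      · have hD1 : 1 ≤ D := ht1.trans hDt
        have hDpos : 0 < D := lt_of_lt_of_le one_pos hD1
        have ht_r : 1 ≤ t ^ r := by
          calc (1:ℝ) = 1 ^ r := (Real.one_rpow r).symm
            _ ≤ t ^ r := Real.rpow_le_rpow zero_le_one ht1 hr0.le
        have hMge : 2 * g ≤ M := by rw [hMdef]; nlinarith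
        have hgr : L z - M ≤ g * D ^ r := by
          have := hLle z
          nlinarith
        have hsplit : D ^ r = D ^ (r - (p:ℝ)) * D ^ (p:ℝ) := by
          rw [← Real.rpow_add hDpos]
          ring_nf
        have hexp : D ^ (r - (p:ℝ)) ≤ t ^ (r - (p:ℝ)) := by
          have h1 : t ^ ((p:ℝ) - r) ≤ D ^ ((p:ℝ) - r) :=
            Real.rpow_le_rpow ht0.le hDt (by linarith)
          have h2 : (0:ℝ) < t ^ ((p:ℝ) - r) := Real.rpow_pos_of_pos ht0 _
          have h3 := inv_anti₀ h2 h1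
          rw [← Real.rpow_neg ht0.le, ← Real.rpow_neg hDpos.le] at h3
          simpa [neg_sub] using h3
        have hDnat : D ^ (p:ℝ) = D ^ p := Real.rpow_natCast D p
        have hDp_pos : (0:ℝ) < D ^ (p:ℝ) := Real.rpow_pos_of_pos hDpos _
        calc L z - M ≤ g * D ^ r := hgr
          _ = g * (D ^ (r - (p:ℝ)) * D ^ (p:ℝ)) := by rw [← hsplit]
          _ ≤ g * (t ^ (r - (p:ℝ)) * D ^ (p:ℝ)) := by
              have := mul_le_mul_of_nonneg_right hexp hDp_pos.le
              nlinarith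
          _ = (g * t ^ (r - (p:ℝ))) * D ^ p := by rw [← hDnat]; ring
          _ ≤ (2 * g * t ^ (r - (p:ℝ))) * D ^ p := by
              have htr_pos : (0:ℝ) < t ^ (r - (p:ℝ)) := Real.rpow_pos_of_pos ht0 _
              nlinarith [mul_nonneg (mul_nonneg hg.le htr_pos.le) (pow_nonneg hD0 p)]
    calc ENNReal.ofReal (L z - M) ≤ ENNReal.ofReal ((2 * g * t ^ (r - (p:ℝ))) * D ^ p) :=
          ENNReal.ofReal_le_ofReal key
      _ = ENNReal.ofReal (2 * g * t ^ (r - (p:ℝ))) * Dp z := by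
          rw [ENNReal.ofReal_mul]
          have := Real.rpow_pos_of_pos ht0 (r - (p:ℝ))
          positivity
  have hTail : ∀ Q : ProbabilityMeasure 𝒵, Q ∈ ambiguitySet c Phat ε →
      ∫⁻ z, ENNReal.ofReal (L z - M) ∂Q.toMeasure ≤ ENNReal.ofReal τ := by
    intro Q hQ
    have htr_pos : (0:ℝ) < t ^ (r - (p:ℝ)) := Real.rpow_pos_of_pos ht0 _
    calc ∫⁻ z, ENNReal.ofReal (L z - M) ∂Q.toMeasure
        ≤ ∫⁻ z, ENNReal.ofReal (2 * g * t ^ (r - (p:ℝ))) * Dp z ∂Q.toMeasure :=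
          lintegral_mono hTailPoint
      _ = ENNReal.ofReal (2 * g * t ^ (r - (p:ℝ))) * ∫⁻ z, Dp z ∂Q.toMeasure :=
          lintegral_const_mul _ hDpmeas
      _ ≤ ENNReal.ofReal (2 * g * t ^ (r - (p:ℝ))) * ENNReal.ofReal (K.toReal + 1) := by
          gcongr
          calc ∫⁻ z, Dp z ∂Q.toMeasure ≤ K := momK Q hQ
            _ = ENNReal.ofReal K.toReal := (ENNReal.ofReal_toReal hK).symm
            _ ≤ ENNReal.ofReal (K.toReal + 1) := ENNReal.ofReal_le_ofReal (by linarith)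
      _ = ENNReal.ofReal τ := by
          rw [← ENNReal.ofReal_mul (by positivity), hτdef]
          ring_nf
  -- the pointwise truncation identity
  have peq : ∀ z : 𝒵, ENNReal.ofReal (L z) + ENNReal.ofReal (M - L z)
      = ENNReal.ofReal M + (ENNReal.ofReal (L z - M) + ENNReal.ofReal (-(L z))) := by
    intro z
    rcases le_total (L z) 0 with h1 | h1
    · rw [ENNReal.ofReal_eq_zero.mpr h1, ENNReal.ofReal_eq_zero.mpr (by linarith : L z - M ≤ 0)]
      rw [show M - L z = M + (-(L z)) by ring, ENNReal.ofReal_add hM0.le (by linarith)]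
      simp
    · rcases le_total (L z) M with h2 | h2
      · rw [ENNReal.ofReal_eq_zero.mpr (by linarith : L z - M ≤ 0),
          ENNReal.ofReal_eq_zero.mpr (by linarith : -(L z) ≤ 0)]
        simp only [add_zero, zero_add]
        rw [← ENNReal.ofReal_add h1 (by linarith : (0:ℝ) ≤ M - L z)]
        ring_nf
      · rw [ENNReal.ofReal_eq_zero.mpr (by linarith : M - L z ≤ 0),
          ENNReal.ofReal_eq_zero.mpr (by linarith : -(L z) ≤ 0)]
        simp only [add_zero, zero_add]
        rw [← ENNReal.ofReal_add hM0.le (by linarith : (0:ℝ) ≤ L z - M)]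
        ring_nf
  have hMLmeas : Measurable fun z => ENNReal.ofReal (M - L z) :=
    (measurable_const.sub hLmeas).ennreal_ofReal
  have hLMmeas : Measurable fun z => ENNReal.ofReal (L z - M) :=
    (hLmeas.sub measurable_const).ennreal_ofReal
  have hId : ∀ Q : ProbabilityMeasure 𝒵,
      (∫⁻ z, ENNReal.ofReal (L z) ∂Q.toMeasure) + (∫⁻ z, ENNReal.ofReal (M - L z) ∂Q.toMeasure)
      = ENNReal.ofReal M + ((∫⁻ z, ENNReal.ofReal (L z - M) ∂Q.toMeasure)
          + (∫⁻ z, ENNReal.ofReal (-(L z)) ∂Q.toMeasure)) := by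
    intro Q
    have h1 := lintegral_congr (μ := Q.toMeasure) peq
    rw [lintegral_add_left hLmeas.ennreal_ofReal, lintegral_add_left measurable_const,
      lintegral_add_left hLMmeas, lintegral_const, measure_univ, mul_one] at h1
    exact h1
  -- notation for the four integrals
  set A : ProbabilityMeasure 𝒵 → ℝ≥0∞ :=
    fun Q => ∫⁻ z, ENNReal.ofReal (L z) ∂Q.toMeasure with hAdef
  set B : ProbabilityMeasure 𝒵 → ℝ≥0∞ :=
    fun Q => ∫⁻ z, ENNReal.ofReal (-(L z)) ∂Q.toMeasure with hBdef
  set N : ProbabilityMeasure 𝒵 → ℝ≥0∞ :=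
    fun Q => ∫⁻ z, ENNReal.ofReal (M - L z) ∂Q.toMeasure with hNdef
  set T : ProbabilityMeasure 𝒵 → ℝ≥0∞ :=
    fun Q => ∫⁻ z, ENNReal.ofReal (L z - M) ∂Q.toMeasure with hTdef
  -- Claim 1: upper bound on the expected loss
  have claim1 : ∀ Q : ProbabilityMeasure 𝒵, Q ∈ ambiguitySet c Phat ε →
      eint Q.toMeasure (ℓ θ) ≤ ((M + τ : ℝ) : EReal) - ((N Q : ℝ≥0∞) : EReal) := by
    intro Q hQ
    rw [show eint Q.toMeasure (ℓ θ) = ((A Q : ℝ≥0∞) : EReal) - ((B Q : ℝ≥0∞) : EReal)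
      from feq Q]
    have hIdQ : A Q + N Q = ENNReal.ofReal M + (T Q + B Q) := hId Q
    have hTQ : T Q ≤ ENNReal.ofReal τ := hTail Q hQ
    have hTQfin : T Q ≠ ⊤ := ne_top_of_le_ne_top ENNReal.ofReal_ne_top hTQ
    have hAQ : A Q ≠ ⊤ := hAfin Q hQ
    rcases eq_or_ne (B Q) ⊤ with hB | hB
    · rw [hB, EReal.coe_ennreal_top, ereal_coe_sub_top]
      exact bot_le
    · rcases eq_or_ne (N Q) ⊤ with hN | hN
      · exfalso
        rw [hN] at hIdQ
        have : A Q + ⊤ = ⊤ := by simp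
        rw [this] at hIdQ
        have := hIdQ.symm
        rw [ENNReal.add_eq_top] at this
        rcases this with h | h
        · exact ENNReal.ofReal_ne_top h
        · rw [ENNReal.add_eq_top] at h
          rcases h with h | h
          · exact hTQfin h
          · exact hB h
      · rw [ennreal_toEReal_eq _ hAQ, ennreal_toEReal_eq _ hB, ennreal_toEReal_eq _ hN,
          ← EReal.coe_sub, ← EReal.coe_sub, EReal.coe_le_coe_iff]
        have hreal : (A Q).toReal + (N Q).toReal
            = M + ((T Q).toReal + (B Q).toReal) := by
          have h2 := congrArg ENNReal.toReal hIdQ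
          rw [ENNReal.toReal_add hAQ hN, ENNReal.toReal_add ENNReal.ofReal_ne_top
            (ENNReal.add_ne_top.mpr ⟨hTQfin, hB⟩), ENNReal.toReal_add hTQfin hB,
            ENNReal.toReal_ofReal hM0.le] at h2
          exact h2
        have hTr : (T Q).toReal ≤ τ := ENNReal.toReal_le_of_le_ofReal hτ0 hTQ
        linarith
  -- Claim 2: lower bound at the base point
  have claim2 : ((M : ℝ) : EReal) - ((N Q₀ : ℝ≥0∞) : EReal) ≤ eint Q₀.toMeasure (ℓ θ) := by
    rw [show eint Q₀.toMeasure (ℓ θ) = ((A Q₀ : ℝ≥0∞) : EReal) - ((B Q₀ : ℝ≥0∞) : EReal)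
      from feq Q₀]
    have hIdQ : A Q₀ + N Q₀ = ENNReal.ofReal M + (T Q₀ + B Q₀) := hId Q₀
    have hTQ : T Q₀ ≤ ENNReal.ofReal τ := hTail Q₀ hQ₀
    have hTQfin : T Q₀ ≠ ⊤ := ne_top_of_le_ne_top ENNReal.ofReal_ne_top hTQ
    have hAQ : A Q₀ ≠ ⊤ := hAfin Q₀ hQ₀
    rcases eq_or_ne (N Q₀) ⊤ with hN | hN
    · rw [hN, EReal.coe_ennreal_top, ereal_coe_sub_top]
      exact bot_le
    · rcases eq_or_ne (B Q₀) ⊤ with hB | hB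
      · exfalso
        rw [hB] at hIdQ
        have h1 : T Q₀ + ⊤ = ⊤ := by simp
        rw [h1] at hIdQ
        have h2 : ENNReal.ofReal M + (⊤:ℝ≥0∞) = ⊤ := by simp
        rw [h2] at hIdQ
        rw [ENNReal.add_eq_top] at hIdQ
        rcases hIdQ with h | h
        · exact hAQ h
        · exact hN h
      · rw [ennreal_toEReal_eq _ hAQ, ennreal_toEReal_eq _ hB, ennreal_toEReal_eq _ hN,
          ← EReal.coe_sub, ← EReal.coe_sub, EReal.coe_le_coe_iff]
        have hreal : (A Q₀).toReal + (N Q₀).toReal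
            = M + ((T Q₀).toReal + (B Q₀).toReal) := by
          have h2 := congrArg ENNReal.toReal hIdQ
          rw [ENNReal.toReal_add hAQ hN, ENNReal.toReal_add ENNReal.ofReal_ne_top
            (ENNReal.add_ne_top.mpr ⟨hTQfin, hB⟩), ENNReal.toReal_add hTQfin hB,
            ENNReal.toReal_ofReal hM0.le] at h2
          exact h2
        have hT0 : 0 ≤ (T Q₀).toReal := ENNReal.toReal_nonneg
        linarith
  -- lower semicontinuity of N
  have hNlsc : LowerSemicontinuous N := by
    have hψ : LowerSemicontinuous fun z : 𝒵 => max (M - L z) 0 := by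
      intro x v hv
      have hv' : v < max (M - L x) 0 := hv
      rcases lt_or_ge v 0 with hv0 | hv0
      · exact Eventually.of_forall fun z =>
          lt_of_lt_of_le hv0 (le_max_right (M - L z) 0)
      · have hvx : v < M - L x := by
          rcases le_total (M - L x) 0 with h | h
          · rw [max_eq_right h] at hv'; linarith
          · rwa [max_eq_left h] at hv'
        have hLx : L x < M - v := by linarith
        filter_upwards [hLusc x (M - v) hLx] with z hz
        exact lt_of_lt_of_le (show v < M - L z by linarith) (le_max_left (M - L z) 0)
    have h0 : ∀ z : 𝒵, 0 ≤ max (M - L z) 0 := fun z => le_max_right _ _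
    have := lsc_lintegral (Ω := 𝒵) _ hψ h0
    have heq : (fun Q : ProbabilityMeasure 𝒵 =>
        ∫⁻ z, ENNReal.ofReal (max (M - L z) 0) ∂(Q : Measure 𝒵)) = N := by
      funext Q
      rw [hNdef]
      exact lintegral_congr fun z => ofReal_max_zero' (M - L z)
    rwa [heq] at this
  -- final assembly
  have hmem : ∀ᶠ Q in 𝓝[ambiguitySet c Phat ε] Q₀, Q ∈ ambiguitySet c Phat ε :=
    eventually_mem_nhdsWithin
  rcases le_total M y' with hMy | hMy
  · -- easy case: the truncation level is below y'
    filter_upwards [hmem] with Q hQ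
    have h1 := claim1 Q hQ
    have h2 : ((M + τ : ℝ) : EReal) - ((N Q : ℝ≥0∞) : EReal) ≤ ((M + τ : ℝ) : EReal) := by
      have h3 : ((0:ℝ≥0∞) : EReal) ≤ ((N Q : ℝ≥0∞) : EReal) := by
        exact_mod_cast bot_le
      calc ((M + τ : ℝ) : EReal) - ((N Q : ℝ≥0∞) : EReal)
          ≤ ((M + τ : ℝ) : EReal) - ((0:ℝ≥0∞) : EReal) := EReal.sub_le_sub le_rfl h3
        _ = ((M + τ : ℝ) : EReal) := by simp
    have h4 : ((M + τ : ℝ) : EReal) < (y'' : EReal) := by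
      rw [EReal.coe_lt_coe_iff]
      linarith
    calc eint Q.toMeasure (ℓ θ) ≤ ((M + τ : ℝ) : EReal) - ((N Q : ℝ≥0∞) : EReal) := h1
      _ ≤ ((M + τ : ℝ) : EReal) := h2
      _ < (y'' : EReal) := h4
      _ < y := hy''2
  · -- main case: use lower semicontinuity of N
    have hbN : ENNReal.ofReal (M - y') < N Q₀ := by
      by_contra hnot
      push_neg at hnot
      have hNfin : N Q₀ ≠ ⊤ := ne_top_of_le_ne_top ENNReal.ofReal_ne_top hnot
      have h1 : ((M : ℝ) : EReal) - ((ENNReal.ofReal (M - y') : ℝ≥0∞) : EReal)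
          ≤ ((M : ℝ) : EReal) - ((N Q₀ : ℝ≥0∞) : EReal) := by
        apply EReal.sub_le_sub le_rfl
        exact_mod_cast hnot
      have h2 : ((M : ℝ) : EReal) - ((ENNReal.ofReal (M - y') : ℝ≥0∞) : EReal)
          = ((y' : ℝ) : EReal) := by
        rw [ennreal_toEReal_eq _ ENNReal.ofReal_ne_top,
          ENNReal.toReal_ofReal (by linarith : (0:ℝ) ≤ M - y'), ← EReal.coe_sub]
        norm_num
      have h3 : ((y' : ℝ) : EReal) ≤ eint Q₀.toMeasure (ℓ θ) := by
        rw [← h2]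
        exact h1.trans claim2
      exact absurd (lt_of_le_of_lt h3 hy'1) (lt_irrefl _)
    have hNev : ∀ᶠ Q in 𝓝[ambiguitySet c Phat ε] Q₀, ENNReal.ofReal (M - y') < N Q :=
      (hNlsc Q₀ _ hbN).filter_mono nhdsWithin_le_nhds
    filter_upwards [hmem, hNev] with Q hQ hNQ
    have h1 := claim1 Q hQ
    have h2 : ((M + τ : ℝ) : EReal) - ((N Q : ℝ≥0∞) : EReal) < ((y' + τ : ℝ) : EReal) := by
      rcases eq_or_ne (N Q) ⊤ with hN | hN
      · rw [hN, EReal.coe_ennreal_top, ereal_coe_sub_top]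
        exact EReal.bot_lt_coe _
      · rw [ennreal_toEReal_eq _ hN, ← EReal.coe_sub, EReal.coe_lt_coe_iff]
        have h3 : M - y' < (N Q).toReal := by
          have := ENNReal.toReal_lt_toReal ENNReal.ofReal_ne_top hN |>.mpr hNQ
          rwa [ENNReal.toReal_ofReal (by linarith : (0:ℝ) ≤ M - y')] at this
        linarith
    have h4 : ((y' + τ : ℝ) : EReal) < (y'' : EReal) := by
      rw [EReal.coe_lt_coe_iff]
      linarith
    calc eint Q.toMeasure (ℓ θ) ≤ ((M + τ : ℝ) : EReal) - ((N Q : ℝ≥0∞) : EReal) := h1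
      _ < ((y' + τ : ℝ) : EReal) := h2
      _ < (y'' : EReal) := h4
      _ < y := hy''2
end
end

section
/- Let L : ℝ → (−∞, ∞] be proper, convex and lower semicontinuous, and let c : ℝ^d × ℝ^d → [0, ∞] be proper and lower semicontinuous with c(z, ẑ) = 0 if and only if z = ẑ. For θ ∈ ℝ^d, λ ≥ 0 and ẑ ∈ ℝ^d, define ℓ_c(θ, λ, ẑ) = sup{L(⟨θ, z⟩) − λ c(z, ẑ) : z ∈ dom c(·, ẑ)}, where 0·c(z, ẑ) = 0 for z ∈ dom c(·, ẑ). Then ℓ_c(θ, λ, ẑ) = sup_{γ ∈ dom L*} λ c^{*1}(γθ/λ, ẑ) − L*(γ), where for λ = 0 the perspective λ c^{*1}(x/λ, ẑ) is understood as the support function sup{⟨x, z⟩ : z ∈ dom c(·, ẑ)}. Moreover, for each fixed ẑ, the map (θ, λ) ↦ ℓ_c(θ, λ, ẑ) is convex on ℝ^d × [0, ∞). -/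
open ENNReal Set

noncomputable section

/-- The inner product `⟨x, y⟩ = Σ_i x_i y_i` on `ℝ^d`. -/
def dotp {d : ℕ} (x y : Fin d → ℝ) : ℝ := ∑ i, x i * y i

namespace TolandAux

lemma iSup_sub_coe {ι : Sort*} (f : ι → EReal) (r : ℝ) :
    (⨆ i, f i) - (r : EReal) = ⨆ i, f i - (r : EReal) := by
  apply le_antisymm
  · rw [EReal.sub_le_iff_le_add (.inl (EReal.coe_ne_bot r)) (.inl (EReal.coe_ne_top r))]
    refine iSup_le fun i => ?_
    rw [← EReal.sub_le_iff_le_add (.inl (EReal.coe_ne_bot r)) (.inl (EReal.coe_ne_top r))]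
    exact le_iSup (fun i => f i - (r : EReal)) i
  · exact iSup_le fun i => EReal.sub_le_sub (le_iSup f i) le_rfl

lemma mul_le_iff_le_inv_mul {r : ℝ} (hr : 0 < r) (x y : EReal) :
    (r : EReal) * x ≤ y ↔ x ≤ ((r⁻¹ : ℝ) : EReal) * y := by
  constructor
  · intro h
    have := mul_le_mul_of_nonneg_left h (by exact_mod_cast (inv_pos.2 hr).le : (0:EReal) ≤ ((r⁻¹:ℝ):EReal))
    rwa [← mul_assoc, ← EReal.coe_mul, inv_mul_cancel₀ hr.ne', EReal.coe_one, one_mul] at this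
  · intro h
    have := mul_le_mul_of_nonneg_left h (by exact_mod_cast hr.le : (0:EReal) ≤ ((r:ℝ):EReal))
    rwa [← mul_assoc, ← EReal.coe_mul, mul_inv_cancel₀ hr.ne', EReal.coe_one, one_mul] at this

lemma mul_iSup_of_pos {ι : Sort*} {r : ℝ} (hr : 0 < r) (f : ι → EReal) :
    (r : EReal) * (⨆ i, f i) = ⨆ i, (r : EReal) * f i := by
  apply le_antisymm
  · rw [mul_le_iff_le_inv_mul hr]
    refine iSup_le fun i => ?_
    rw [← mul_le_iff_le_inv_mul hr]
    exact le_iSup (fun i => (r : EReal) * f i) i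
  · exact iSup_le fun i => mul_le_mul_of_nonneg_left (le_iSup f i) (by exact_mod_cast hr.le)


def lstar (L : ℝ → EReal) (γ : ℝ) : EReal := ⨆ s : ℝ, ((γ * s : ℝ) : EReal) - L s

variable {L : ℝ → EReal}

lemma lstar_ne_bot (ht : ∃ s, L s ≠ ⊤) (γ : ℝ) : lstar L γ ≠ ⊥ := by
  obtain ⟨s, hs⟩ := ht
  have h2 : ((γ * s - (L s).toReal : ℝ) : EReal) ≤ ((γ * s : ℝ) : EReal) - L s := by
    rw [EReal.coe_sub]
    exact EReal.sub_le_sub le_rfl (EReal.le_coe_toReal hs)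
  have h3 : (⊥ : EReal) < ((γ * s : ℝ) : EReal) - L s :=
    lt_of_lt_of_le (EReal.bot_lt_coe _) h2
  exact (h3.trans_le (le_iSup (fun s => ((γ * s : ℝ) : EReal) - L s) s)).ne'

lemma fenchelYoung (hb : ∀ s, L s ≠ ⊥) (ht : ∃ s, L s ≠ ⊤) {γ : ℝ} (hγ : lstar L γ ≠ ⊤)
    (s : ℝ) : ((γ * s : ℝ) : EReal) - lstar L γ ≤ L s := by
  by_cases hLs : L s = ⊤
  · simp [hLs]
  · have hfy : ((γ * s : ℝ) : EReal) - L s ≤ lstar L γ :=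
      le_iSup (fun s => ((γ * s : ℝ) : EReal) - L s) s
    have hv : (((L s).toReal : ℝ) : EReal) = L s := EReal.coe_toReal hLs (hb s)
    have hK : (((lstar L γ).toReal : ℝ) : EReal) = lstar L γ :=
      EReal.coe_toReal hγ (lstar_ne_bot ht γ)
    rw [← hv, ← hK] at hfy ⊢
    rw [← EReal.coe_sub] at hfy ⊢
    have hfy' : γ * s - (L s).toReal ≤ (lstar L γ).toReal := by exact_mod_cast hfy
    exact_mod_cast by linarith

lemma separation (hb : ∀ s, L s ≠ ⊥) (ht : ∃ s, L s ≠ ⊤)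
    (hconv : ∀ s t : ℝ, ∀ a b : ℝ, 0 ≤ a → 0 ≤ b → a + b = 1 →
      L (a * s + b * t) ≤ (a : EReal) * L s + (b : EReal) * L t)
    (hlsc : LowerSemicontinuous L) (s₀ m : ℝ) (hm : (m : EReal) < L s₀) :
    ∃ α β u : ℝ, α * s₀ + β * m < u ∧ 0 ≤ β ∧
      ∀ s t : ℝ, L s ≤ (t : EReal) → u < α * s + β * t := by
  set E : Set (ℝ × ℝ) := {p | L p.1 ≤ (p.2 : EReal)} with hE
  have hEconv : Convex ℝ E := by
    rintro p hp q hq a b ha hb' hab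
    simp only [hE, mem_setOf_eq] at hp hq ⊢
    have h1 : (a • p + b • q).1 = a * p.1 + b * q.1 := rfl
    have h2 : (a • p + b • q).2 = a * p.2 + b * q.2 := rfl
    rw [h1, h2]
    calc L (a * p.1 + b * q.1) ≤ (a : EReal) * L p.1 + (b : EReal) * L q.1 :=
          hconv _ _ a b ha hb' hab
      _ ≤ (a : EReal) * (p.2 : EReal) + (b : EReal) * (q.2 : EReal) :=
          add_le_add (mul_le_mul_of_nonneg_left hp (by exact_mod_cast ha))
            (mul_le_mul_of_nonneg_left hq (by exact_mod_cast hb'))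
      _ = ((a * p.2 + b * q.2 : ℝ) : EReal) := by norm_cast
  have hEclosed : IsClosed E := by
    have h1 : IsClosed {p : ℝ × EReal | L p.1 ≤ p.2} := hlsc.isClosed_epigraph
    have h2 : Continuous fun p : ℝ × ℝ => ((p.1, (p.2 : EReal)) : ℝ × EReal) :=
      continuous_fst.prodMk (continuous_coe_real_ereal.comp continuous_snd)
    exact h1.preimage h2
  have hnot : ((s₀, m) : ℝ × ℝ) ∉ E := by
    simp only [hE, mem_setOf_eq, not_le]
    exact hm
  obtain ⟨f, u, hfu, hfE⟩ := geometric_hahn_banach_point_closed hEconv hEclosed hnot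
  have hf : ∀ p : ℝ × ℝ, f p = f (1, 0) * p.1 + f (0, 1) * p.2 := by
    intro p
    have hp : p = p.1 • ((1 : ℝ), (0 : ℝ)) + p.2 • ((0 : ℝ), (1 : ℝ)) := by
      ext <;> simp
    calc f p = f (p.1 • ((1 : ℝ), (0 : ℝ)) + p.2 • ((0 : ℝ), (1 : ℝ))) := by rw [← hp]
      _ = p.1 * f (1, 0) + p.2 * f (0, 1) := by
          rw [map_add, map_smul, map_smul]; simp [smul_eq_mul]
      _ = f (1, 0) * p.1 + f (0, 1) * p.2 := by ring
  refine ⟨f (1, 0), f (0, 1), u, by have := hfu; rw [hf] at this; simpa using this, ?_, ?_⟩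
  · by_contra hneg
    push_neg at hneg
    obtain ⟨s₁, hs₁⟩ := ht
    set v := (L s₁).toReal with hv
    have hLv : L s₁ ≤ (v : EReal) := EReal.le_coe_toReal hs₁
    set t := max v ((u - f (1, 0) * s₁) / f (0, 1)) with htdef
    have hmem : ((s₁, t) : ℝ × ℝ) ∈ E := by
      simp only [hE, mem_setOf_eq]
      exact hLv.trans (by exact_mod_cast le_max_left _ _)
    have := hfE _ hmem
    rw [hf] at this
    have htge : (u - f (1, 0) * s₁) / f (0, 1) ≤ t := le_max_right _ _
    have : f (0, 1) * t ≤ u - f (1, 0) * s₁ := by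
      calc f (0, 1) * t ≤ f (0, 1) * ((u - f (1, 0) * s₁) / f (0, 1)) := by
            exact mul_le_mul_of_nonpos_left htge hneg.le
        _ = u - f (1, 0) * s₁ := mul_div_cancel₀ _ hneg.ne
    linarith
  · intro s t hst
    have hmem : ((s, t) : ℝ × ℝ) ∈ E := hst
    have := hfE _ hmem
    rwa [hf] at this

lemma pos_case {α β u : ℝ} (hb : ∀ s, L s ≠ ⊥) (hβ : 0 < β)
    (h2 : ∀ s t : ℝ, L s ≤ (t : EReal) → u < α * s + β * t) :
    lstar L (-α / β) ≤ ((-u / β : ℝ) : EReal) := by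
  refine iSup_le fun s => ?_
  by_cases hLs : L s = ⊤
  · simp [hLs]
  · have hv : (((L s).toReal : ℝ) : EReal) = L s := EReal.coe_toReal hLs (hb s)
    set v := (L s).toReal with hvdef
    have hs : u < α * s + β * v := h2 s v (le_of_eq hv.symm)
    rw [← hv, ← EReal.coe_sub, EReal.coe_le_coe_iff]
    have heq : -α / β * s - v = (-α * s - β * v) / β := by field_simp
    rw [heq, div_le_div_iff₀ hβ hβ]
    nlinarith

lemma dom_nonempty (hb : ∀ s, L s ≠ ⊥) (ht : ∃ s, L s ≠ ⊤)
    (hconv : ∀ s t : ℝ, ∀ a b : ℝ, 0 ≤ a → 0 ≤ b → a + b = 1 →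
      L (a * s + b * t) ≤ (a : EReal) * L s + (b : EReal) * L t)
    (hlsc : LowerSemicontinuous L) : ∃ γ : ℝ, lstar L γ ≠ ⊤ := by
  obtain ⟨s₁, hs₁⟩ := ht
  have hm : (((L s₁).toReal - 1 : ℝ) : EReal) < L s₁ := by
    calc (((L s₁).toReal - 1 : ℝ) : EReal) < (((L s₁).toReal : ℝ) : EReal) := by
          exact_mod_cast sub_one_lt _
      _ = L s₁ := EReal.coe_toReal hs₁ (hb s₁)
  obtain ⟨α, β, u, h1, hβ0, h2⟩ := separation hb ⟨s₁, hs₁⟩ hconv hlsc s₁ _ hm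
  have hβpos : 0 < β := by
    rcases hβ0.eq_or_lt with hβ | hβ
    · exfalso
      have hu := h2 s₁ (L s₁).toReal (le_of_eq (EReal.coe_toReal hs₁ (hb s₁)).symm)
      rw [← hβ] at h1 hu
      nlinarith
    · exact hβ
  exact ⟨-α / β, ne_top_of_le_ne_top (EReal.coe_ne_top _) (pos_case hb hβpos h2)⟩

lemma key (hb : ∀ s, L s ≠ ⊥) (ht : ∃ s, L s ≠ ⊤)
    (hconv : ∀ s t : ℝ, ∀ a b : ℝ, 0 ≤ a → 0 ≤ b → a + b = 1 →
      L (a * s + b * t) ≤ (a : EReal) * L s + (b : EReal) * L t)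
    (hlsc : LowerSemicontinuous L) (s₀ m : ℝ) (hm : (m : EReal) < L s₀) :
    ∃ γ : ℝ, lstar L γ ≠ ⊤ ∧ (m : EReal) ≤ ((γ * s₀ : ℝ) : EReal) - lstar L γ := by
  obtain ⟨α, β, u, h1, hβ0, h2⟩ := separation hb ht hconv hlsc s₀ m hm
  rcases hβ0.eq_or_lt with hβ | hβpos
  · -- β = 0
    rw [← hβ] at h1 h2
    simp only [zero_mul, add_zero] at h1 h2
    have hdom : ∀ s : ℝ, L s ≠ ⊤ → u < α * s := by
      intro s hs
      exact h2 s (L s).toReal (le_of_eq (EReal.coe_toReal hs (hb s)).symm)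
    obtain ⟨γ₀, hγ₀⟩ := dom_nonempty hb ht hconv hlsc
    set K := (lstar L γ₀).toReal with hKdef
    have hKeq : ((K : ℝ) : EReal) = lstar L γ₀ := EReal.coe_toReal hγ₀ (lstar_ne_bot ht γ₀)
    have hus₀ : 0 < u - α * s₀ := by linarith
    set T : ℝ := max 0 ((m - γ₀ * s₀ + K) / (u - α * s₀)) with hTdef
    have hT0 : 0 ≤ T := le_max_left _ _
    have hbound : lstar L (γ₀ - T * α) ≤ ((K - T * u : ℝ) : EReal) := by
      refine iSup_le fun s => ?_
      by_cases hLs : L s = ⊤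
      · simp [hLs]
      · have hv : (((L s).toReal : ℝ) : EReal) = L s := EReal.coe_toReal hLs (hb s)
        set v := (L s).toReal with hvdef
        have hfy : ((γ₀ * s : ℝ) : EReal) - L s ≤ lstar L γ₀ :=
          le_iSup (fun s => ((γ₀ * s : ℝ) : EReal) - L s) s
        rw [← hv, ← hKeq, ← EReal.coe_sub, EReal.coe_le_coe_iff] at hfy
        rw [← hv, ← EReal.coe_sub, EReal.coe_le_coe_iff]
        have hαs := hdom s hLs
        nlinarith [mul_le_mul_of_nonneg_left hαs.le hT0]
    have hγtop : lstar L (γ₀ - T * α) ≠ ⊤ := ne_top_of_le_ne_top (EReal.coe_ne_top _) hbound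
    refine ⟨γ₀ - T * α, hγtop, ?_⟩
    have hstep : (((γ₀ - T * α) * s₀ : ℝ) : EReal) - ((K - T * u : ℝ) : EReal) ≤
        (((γ₀ - T * α) * s₀ : ℝ) : EReal) - lstar L (γ₀ - T * α) := EReal.sub_le_sub le_rfl hbound
    refine le_trans ?_ hstep
    rw [← EReal.coe_sub, EReal.coe_le_coe_iff]
    have hTge : (m - γ₀ * s₀ + K) / (u - α * s₀) ≤ T := le_max_right _ _
    rw [div_le_iff₀ hus₀] at hTge
    nlinarith
  · -- β > 0
    have hbound := pos_case hb hβpos h2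
    refine ⟨-α / β, ne_top_of_le_ne_top (EReal.coe_ne_top _) hbound, ?_⟩
    have hstep : ((-α / β * s₀ : ℝ) : EReal) - ((-u / β : ℝ) : EReal) ≤
        ((-α / β * s₀ : ℝ) : EReal) - lstar L (-α / β) := EReal.sub_le_sub le_rfl hbound
    refine le_trans ?_ hstep
    rw [← EReal.coe_sub, EReal.coe_le_coe_iff]
    have heq : -α / β * s₀ - -u / β = (-α * s₀ + u) / β := by field_simp; ring
    rw [heq, le_div_iff₀ hβpos]
    nlinarith

lemma fenchelMoreau (hb : ∀ s, L s ≠ ⊥) (ht : ∃ s, L s ≠ ⊤)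
    (hconv : ∀ s t : ℝ, ∀ a b : ℝ, 0 ≤ a → 0 ≤ b → a + b = 1 →
      L (a * s + b * t) ≤ (a : EReal) * L s + (b : EReal) * L t)
    (hlsc : LowerSemicontinuous L) (s : ℝ) :
    L s = ⨆ γ ∈ {γ : ℝ | lstar L γ ≠ ⊤}, (((γ * s : ℝ) : EReal) - lstar L γ) := by
  apply le_antisymm
  · rw [← EReal.ge_of_forall_gt_iff_ge]
    intro z hz
    obtain ⟨γ, hγ, hle⟩ := key hb ht hconv hlsc s z hz
    exact hle.trans (le_iSup₂_of_le γ hγ le_rfl)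
  · exact iSup₂_le fun γ hγ => fenchelYoung hb ht hγ s


/-- coercion of a finite `ℝ≥0∞` to `EReal` equals real coercion of its `toReal`. -/
lemma coe_ennreal_fin {x : ℝ≥0∞} (hx : x ≠ ⊤) :
    ((x : ℝ≥0∞) : EReal) = ((x.toReal : ℝ) : EReal) := by
  have h1 : ((x : ℝ≥0∞) : EReal) ≠ ⊤ := by
    simpa [EReal.coe_ennreal_eq_top_iff] using hx
  have h2 : ((x : ℝ≥0∞) : EReal) ≠ ⊥ := by
    refine ne_of_gt (lt_of_lt_of_le ?_ (EReal.coe_ennreal_nonneg x))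
    simp
  rw [← EReal.coe_toReal h1 h2, EReal.toReal_coe_ennreal]

lemma mul_ne_bot_of_nonneg {a : ℝ} (ha : 0 ≤ a) {X : EReal} (hX : X ≠ ⊥) :
    (a : EReal) * X ≠ ⊥ := by
  rcases ha.eq_or_lt with h | h
  · rw [← h, EReal.coe_zero, EReal.zero_mul]; simp
  · induction X using EReal.rec with
    | bot => exact absurd rfl hX
    | coe x => rw [← EReal.coe_mul]; exact EReal.coe_ne_bot _
    | top => rw [EReal.coe_mul_top_of_pos h]; simp

lemma mul_sub_coe {a r : ℝ} (ha : 0 ≤ a) (X : EReal) :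
    (a : EReal) * (X - (r : ℝ)) = (a : EReal) * X - ((a * r : ℝ) : EReal) := by
  rcases ha.eq_or_lt with h | h
  · rw [← h]
    simp [EReal.coe_zero, EReal.zero_mul]
  · induction X using EReal.rec with
    | bot => rw [EReal.bot_sub, EReal.coe_mul_bot_of_pos h, EReal.bot_sub]
    | coe x =>
        rw [← EReal.coe_sub, ← EReal.coe_mul, ← EReal.coe_mul, ← EReal.coe_sub]
        norm_cast
        ring
    | top => rw [EReal.top_sub_coe, EReal.coe_mul_top_of_pos h, EReal.top_sub_coe]

lemma sub_add_sub_comm {P Q : EReal} (hP : P ≠ ⊥) (hQ : Q ≠ ⊥) (p q : ℝ) :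
    (P - (p : ℝ)) + (Q - (q : ℝ)) = (P + Q) - ((p + q : ℝ) : EReal) := by
  induction P using EReal.rec with
  | bot => exact absurd rfl hP
  | coe x =>
      induction Q using EReal.rec with
      | bot => exact absurd rfl hQ
      | coe y =>
          rw [← EReal.coe_sub, ← EReal.coe_sub, ← EReal.coe_add, ← EReal.coe_add,
            ← EReal.coe_sub]
          norm_cast
          ring
      | top =>
          rw [EReal.top_sub_coe, ← EReal.coe_sub, EReal.add_top_of_ne_bot (EReal.coe_ne_bot _),
            EReal.add_top_of_ne_bot (EReal.coe_ne_bot _), EReal.top_sub_coe]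
  | top =>
      rw [EReal.top_sub_coe, EReal.top_add_of_ne_bot (by
        induction Q using EReal.rec with
        | bot => exact absurd rfl hQ
        | coe y => rw [← EReal.coe_sub]; exact EReal.coe_ne_bot _
        | top => rw [EReal.top_sub_coe]; simp),
        EReal.top_add_of_ne_bot hQ, EReal.top_sub_coe]


lemma biSup_sub_coe {ι : Sort*} (p : ι → Prop) (f : ι → EReal) (r : ℝ) :
    (⨆ i, ⨆ _ : p i, f i) - (r : ℝ) = ⨆ i, ⨆ _ : p i, (f i - (r : ℝ)) := by
  rw [iSup_sub_coe]
  exact iSup_congr fun i => iSup_sub_coe _ r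

lemma dotp_smul {d : ℕ} (a : ℝ) (x z : Fin d → ℝ) : dotp (a • x) z = a * dotp x z := by
  simp [dotp, Finset.mul_sum, mul_assoc]

lemma dotp_add {d : ℕ} (x y z : Fin d → ℝ) : dotp (x + y) z = dotp x z + dotp y z := by
  simp [dotp, add_mul, Finset.sum_add_distrib]

lemma biSup_comm {ι κ : Sort*} (p : ι → Prop) (q : κ → Prop) (F : ι → κ → EReal) :
    (⨆ i, ⨆ _ : p i, ⨆ j, ⨆ _ : q j, F i j) = ⨆ j, ⨆ _ : q j, ⨆ i, ⨆ _ : p i, F i j :=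
  le_antisymm
    (iSup₂_le fun i hi => iSup₂_le fun j hj => le_iSup₂_of_le j hj (le_iSup₂_of_le i hi le_rfl))
    (iSup₂_le fun j hj => iSup₂_le fun i hi => le_iSup₂_of_le i hi (le_iSup₂_of_le j hj le_rfl))

end TolandAux

/-- **Toland-type nonconvex duality for the `c`-transform.**
For a proper convex lower semicontinuous univariate loss `L` and a proper lower
semicontinuous transportation cost `c` satisfying the identity of indiscernibles, the
`c`-transform `ℓ_c(θ, λ, ẑ) = sup {L(⟨θ, z⟩) − λ c(z, ẑ) : z ∈ dom c(·, ẑ)}` equals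
`sup_{γ ∈ dom L*} λ c^{*1}(γθ/λ, ẑ) − L*(γ)`, where for `λ = 0` the perspective is the
support function of `dom c(·, ẑ)`; moreover, `(θ, λ) ↦ ℓ_c(θ, λ, ẑ)` is convex on
`ℝ^d × [0, ∞)` for each fixed `ẑ`. -/
theorem toland_duality_c_transform {d : ℕ}
    (L : ℝ → EReal)
    (hLproper : (∀ s, L s ≠ ⊥) ∧ (∃ s, L s ≠ ⊤))
    (hLconv : ∀ s t : ℝ, ∀ a b : ℝ, 0 ≤ a → 0 ≤ b → a + b = 1 →
      L (a * s + b * t) ≤ (a : EReal) * L s + (b : EReal) * L t)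
    (hLlsc : LowerSemicontinuous L)
    (c : (Fin d → ℝ) → (Fin d → ℝ) → ℝ≥0∞)
    (hc_id : ∀ z zhat, c z zhat = 0 ↔ z = zhat)
    (hc_lsc : LowerSemicontinuous (fun q : (Fin d → ℝ) × (Fin d → ℝ) => c q.1 q.2)) :
    (∀ (θ zhat : Fin d → ℝ) (lam : ℝ), 0 ≤ lam →
      (⨆ z ∈ {z : Fin d → ℝ | c z zhat ≠ ⊤},
          L (dotp θ z) - ((ENNReal.ofReal lam * c z zhat : ℝ≥0∞) : EReal)) =
      (⨆ γ ∈ {γ : ℝ | (⨆ s : ℝ, ((γ * s : ℝ) : EReal) - L s) ≠ ⊤},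
          (if 0 < lam then
            (lam : EReal) *
              (⨆ z : Fin d → ℝ,
                ((dotp (lam⁻¹ • (γ • θ)) z : ℝ) : EReal) - ((c z zhat : ℝ≥0∞) : EReal))
          else
            ⨆ z ∈ {z : Fin d → ℝ | c z zhat ≠ ⊤}, ((dotp (γ • θ) z : ℝ) : EReal)) -
          (⨆ s : ℝ, ((γ * s : ℝ) : EReal) - L s))) ∧
    (∀ zhat : Fin d → ℝ, ∀ θ₁ θ₂ : Fin d → ℝ, ∀ lam₁ lam₂ : ℝ, 0 ≤ lam₁ → 0 ≤ lam₂ →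
      ∀ a b : ℝ, 0 ≤ a → 0 ≤ b → a + b = 1 →
      (⨆ z ∈ {z : Fin d → ℝ | c z zhat ≠ ⊤},
          L (dotp (a • θ₁ + b • θ₂) z) -
            ((ENNReal.ofReal (a * lam₁ + b * lam₂) * c z zhat : ℝ≥0∞) : EReal)) ≤
      (a : EReal) *
        (⨆ z ∈ {z : Fin d → ℝ | c z zhat ≠ ⊤},
          L (dotp θ₁ z) - ((ENNReal.ofReal lam₁ * c z zhat : ℝ≥0∞) : EReal)) +
      (b : EReal) *
        (⨆ z ∈ {z : Fin d → ℝ | c z zhat ≠ ⊤},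
          L (dotp θ₂ z) - ((ENNReal.ofReal lam₂ * c z zhat : ℝ≥0∞) : EReal))) := by
  obtain ⟨hb, ht⟩ := hLproper
  constructor
  · -- Part 1: duality
    intro θ zhat lam hlam
    simp only [show ∀ γ : ℝ, (⨆ s : ℝ, ((γ * s : ℝ) : EReal) - L s) = TolandAux.lstar L γ
      from fun _ => rfl]
    have hcfin : ∀ z ∈ {z : Fin d → ℝ | c z zhat ≠ ⊤}, ENNReal.ofReal lam * c z zhat ≠ ⊤ :=
      fun z hz => ENNReal.mul_ne_top ENNReal.ofReal_ne_top hz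
    have hbranch : ∀ γ : ℝ,
        (⨆ z ∈ {z : Fin d → ℝ | c z zhat ≠ ⊤},
          (((dotp (γ • θ) z : ℝ) : EReal)
            - (((ENNReal.ofReal lam * c z zhat).toReal : ℝ) : EReal))) =
        (if 0 < lam then
            (lam : EReal) *
              (⨆ z : Fin d → ℝ,
                ((dotp (lam⁻¹ • (γ • θ)) z : ℝ) : EReal) - ((c z zhat : ℝ≥0∞) : EReal))
          else
            ⨆ z ∈ {z : Fin d → ℝ | c z zhat ≠ ⊤}, ((dotp (γ • θ) z : ℝ) : EReal)) := by
      intro γ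
      by_cases hpos : 0 < lam
      · rw [if_pos hpos]
        have hall : (⨆ z : Fin d → ℝ,
              ((dotp (lam⁻¹ • (γ • θ)) z : ℝ) : EReal) - ((c z zhat : ℝ≥0∞) : EReal))
            = ⨆ z ∈ {z : Fin d → ℝ | c z zhat ≠ ⊤},
              (((dotp (lam⁻¹ • (γ • θ)) z : ℝ) : EReal) - ((c z zhat : ℝ≥0∞) : EReal)) := by
          apply le_antisymm
          · refine iSup_le fun z => ?_
            by_cases hz : z ∈ {z : Fin d → ℝ | c z zhat ≠ ⊤}
            · exact le_iSup₂_of_le z hz le_rfl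
            · have hcz : c z zhat = ⊤ := not_not.1 hz
              rw [hcz, EReal.coe_ennreal_top, EReal.sub_top]
              exact bot_le
          · exact iSup₂_le fun z _ => le_iSup
              (fun z => ((dotp (lam⁻¹ • (γ • θ)) z : ℝ) : EReal) - ((c z zhat : ℝ≥0∞) : EReal)) z
        refine Eq.symm ?_
        calc (lam : EReal) * (⨆ z : Fin d → ℝ,
              ((dotp (lam⁻¹ • (γ • θ)) z : ℝ) : EReal) - ((c z zhat : ℝ≥0∞) : EReal))
            = (lam : EReal) * ⨆ z ∈ {z : Fin d → ℝ | c z zhat ≠ ⊤},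
              (((dotp (lam⁻¹ • (γ • θ)) z : ℝ) : EReal) - ((c z zhat : ℝ≥0∞) : EReal)) := by
              rw [hall]
          _ = ⨆ z, (lam : EReal) * ⨆ _ : z ∈ {z : Fin d → ℝ | c z zhat ≠ ⊤},
              (((dotp (lam⁻¹ • (γ • θ)) z : ℝ) : EReal) - ((c z zhat : ℝ≥0∞) : EReal)) :=
              TolandAux.mul_iSup_of_pos hpos _
          _ = ⨆ z, ⨆ _ : z ∈ {z : Fin d → ℝ | c z zhat ≠ ⊤}, (lam : EReal) *
              (((dotp (lam⁻¹ • (γ • θ)) z : ℝ) : EReal) - ((c z zhat : ℝ≥0∞) : EReal)) :=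
              iSup_congr fun z => TolandAux.mul_iSup_of_pos hpos _
          _ = ⨆ z ∈ {z : Fin d → ℝ | c z zhat ≠ ⊤},
              (((dotp (γ • θ) z : ℝ) : EReal)
                - (((ENNReal.ofReal lam * c z zhat).toReal : ℝ) : EReal)) := by
              refine iSup_congr fun z => iSup_congr fun hz => ?_
              rw [TolandAux.coe_ennreal_fin hz, TolandAux.dotp_smul, ENNReal.toReal_mul,
                ENNReal.toReal_ofReal hlam, ← EReal.coe_sub, ← EReal.coe_mul, ← EReal.coe_sub,
                EReal.coe_eq_coe_iff]
              field_simp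
      · rw [if_neg hpos]
        have h0 : lam = 0 := le_antisymm (not_lt.1 hpos) hlam
        subst h0
        refine iSup_congr fun z => iSup_congr fun hz => ?_
        simp
    calc
      (⨆ z ∈ {z : Fin d → ℝ | c z zhat ≠ ⊤},
          L (dotp θ z) - ((ENNReal.ofReal lam * c z zhat : ℝ≥0∞) : EReal))
        = ⨆ z ∈ {z : Fin d → ℝ | c z zhat ≠ ⊤},
            ⨆ γ ∈ {γ : ℝ | TolandAux.lstar L γ ≠ ⊤},
              ((((γ * dotp θ z : ℝ) : EReal) - TolandAux.lstar L γ)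
                - (((ENNReal.ofReal lam * c z zhat).toReal : ℝ) : EReal)) := by
          refine iSup_congr fun z => iSup_congr fun hz => ?_
          rw [TolandAux.coe_ennreal_fin (hcfin z hz),
            TolandAux.fenchelMoreau hb ht hLconv hLlsc (dotp θ z),
            TolandAux.biSup_sub_coe]
      _ = ⨆ γ ∈ {γ : ℝ | TolandAux.lstar L γ ≠ ⊤},
            ⨆ z ∈ {z : Fin d → ℝ | c z zhat ≠ ⊤},
              ((((γ * dotp θ z : ℝ) : EReal) - TolandAux.lstar L γ)
                - (((ENNReal.ofReal lam * c z zhat).toReal : ℝ) : EReal)) :=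
          TolandAux.biSup_comm _ _ _
      _ = ⨆ γ ∈ {γ : ℝ | TolandAux.lstar L γ ≠ ⊤},
          ((if 0 < lam then
            (lam : EReal) *
              (⨆ z : Fin d → ℝ,
                ((dotp (lam⁻¹ • (γ • θ)) z : ℝ) : EReal) - ((c z zhat : ℝ≥0∞) : EReal))
          else
            ⨆ z ∈ {z : Fin d → ℝ | c z zhat ≠ ⊤}, ((dotp (γ • θ) z : ℝ) : EReal)) -
          TolandAux.lstar L γ) := by
          refine iSup_congr fun γ => iSup_congr fun hγ => ?_
          have hKeq : (((TolandAux.lstar L γ).toReal : ℝ) : EReal) = TolandAux.lstar L γ :=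
            EReal.coe_toReal hγ (TolandAux.lstar_ne_bot ht γ)
          calc (⨆ z ∈ {z : Fin d → ℝ | c z zhat ≠ ⊤},
              ((((γ * dotp θ z : ℝ) : EReal) - TolandAux.lstar L γ)
                - (((ENNReal.ofReal lam * c z zhat).toReal : ℝ) : EReal)))
              = ⨆ z ∈ {z : Fin d → ℝ | c z zhat ≠ ⊤},
                ((((dotp (γ • θ) z : ℝ) : EReal)
                  - (((ENNReal.ofReal lam * c z zhat).toReal : ℝ) : EReal))
                  - (((TolandAux.lstar L γ).toReal : ℝ) : EReal)) := by
                refine iSup_congr fun z => iSup_congr fun hz => ?_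
                rw [← hKeq, ← EReal.coe_sub, ← EReal.coe_sub, ← EReal.coe_sub, ← EReal.coe_sub,
                  EReal.coe_eq_coe_iff, TolandAux.dotp_smul]
                simp only [EReal.toReal_coe]
                ring
            _ = (⨆ z ∈ {z : Fin d → ℝ | c z zhat ≠ ⊤},
                (((dotp (γ • θ) z : ℝ) : EReal)
                  - (((ENNReal.ofReal lam * c z zhat).toReal : ℝ) : EReal)))
                - (((TolandAux.lstar L γ).toReal : ℝ) : EReal) :=
                (TolandAux.biSup_sub_coe _ _ _).symm
            _ = _ := by rw [hKeq, hbranch γ]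
  · -- Part 2: convexity
    intro zhat θ₁ θ₂ lam₁ lam₂ hl₁ hl₂ a b ha hb' hab
    refine iSup₂_le fun z hz => ?_
    have hzfin : c z zhat ≠ ⊤ := hz
    have hc1 : ((ENNReal.ofReal lam₁ * c z zhat : ℝ≥0∞) : EReal)
        = ((lam₁ * (c z zhat).toReal : ℝ) : EReal) := by
      rw [TolandAux.coe_ennreal_fin (ENNReal.mul_ne_top ENNReal.ofReal_ne_top hzfin),
        ENNReal.toReal_mul, ENNReal.toReal_ofReal hl₁]
    have hc2 : ((ENNReal.ofReal lam₂ * c z zhat : ℝ≥0∞) : EReal)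
        = ((lam₂ * (c z zhat).toReal : ℝ) : EReal) := by
      rw [TolandAux.coe_ennreal_fin (ENNReal.mul_ne_top ENNReal.ofReal_ne_top hzfin),
        ENNReal.toReal_mul, ENNReal.toReal_ofReal hl₂]
    have hc3 : ((ENNReal.ofReal (a * lam₁ + b * lam₂) * c z zhat : ℝ≥0∞) : EReal)
        = (((a * lam₁ + b * lam₂) * (c z zhat).toReal : ℝ) : EReal) := by
      rw [TolandAux.coe_ennreal_fin (ENNReal.mul_ne_top ENNReal.ofReal_ne_top hzfin),
        ENNReal.toReal_mul, ENNReal.toReal_ofReal (by positivity)]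
    have hdot : dotp (a • θ₁ + b • θ₂) z = a * dotp θ₁ z + b * dotp θ₂ z := by
      rw [TolandAux.dotp_add, TolandAux.dotp_smul, TolandAux.dotp_smul]
    have hLub : L (dotp (a • θ₁ + b • θ₂) z)
        ≤ (a : EReal) * L (dotp θ₁ z) + (b : EReal) * L (dotp θ₂ z) := by
      rw [hdot]; exact hLconv _ _ a b ha hb' hab
    calc L (dotp (a • θ₁ + b • θ₂) z)
          - ((ENNReal.ofReal (a * lam₁ + b * lam₂) * c z zhat : ℝ≥0∞) : EReal)
        = L (dotp (a • θ₁ + b • θ₂) z)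
          - ((a * (lam₁ * (c z zhat).toReal) + b * (lam₂ * (c z zhat).toReal) : ℝ) : EReal) := by
          rw [hc3, show (a * lam₁ + b * lam₂) * (c z zhat).toReal
            = a * (lam₁ * (c z zhat).toReal) + b * (lam₂ * (c z zhat).toReal) from by ring]
      _ ≤ ((a : EReal) * L (dotp θ₁ z) + (b : EReal) * L (dotp θ₂ z))
          - ((a * (lam₁ * (c z zhat).toReal) + b * (lam₂ * (c z zhat).toReal) : ℝ) : EReal) :=
          EReal.sub_le_sub hLub le_rfl
      _ = ((a : EReal) * L (dotp θ₁ z) - ((a * (lam₁ * (c z zhat).toReal) : ℝ) : EReal))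
          + ((b : EReal) * L (dotp θ₂ z) - ((b * (lam₂ * (c z zhat).toReal) : ℝ) : EReal)) :=
          (TolandAux.sub_add_sub_comm (TolandAux.mul_ne_bot_of_nonneg ha (hb _))
            (TolandAux.mul_ne_bot_of_nonneg hb' (hb _)) _ _).symm
      _ = (a : EReal) * (L (dotp θ₁ z) - ((lam₁ * (c z zhat).toReal : ℝ) : EReal))
          + (b : EReal) * (L (dotp θ₂ z) - ((lam₂ * (c z zhat).toReal : ℝ) : EReal)) := by
          rw [TolandAux.mul_sub_coe ha, TolandAux.mul_sub_coe hb']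
      _ ≤ (a : EReal) *
            (⨆ z ∈ {z : Fin d → ℝ | c z zhat ≠ ⊤},
              L (dotp θ₁ z) - ((ENNReal.ofReal lam₁ * c z zhat : ℝ≥0∞) : EReal))
          + (b : EReal) *
            (⨆ z ∈ {z : Fin d → ℝ | c z zhat ≠ ⊤},
              L (dotp θ₂ z) - ((ENNReal.ofReal lam₂ * c z zhat : ℝ≥0∞) : EReal)) := by
          refine add_le_add
            (mul_le_mul_of_nonneg_left ?_ (by exact_mod_cast ha))
            (mul_le_mul_of_nonneg_left ?_ (by exact_mod_cast hb'))
          · rw [← hc1]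
            exact le_iSup₂_of_le z hz le_rfl
          · rw [← hc2]
            exact le_iSup₂_of_le z hz le_rfl
end
end

section
/- Let ‖·‖ be a norm on ℝ^d with dual norm ‖θ‖_* = sup{⟨θ, x⟩ : ‖x‖ ≤ 1}, let p ≥ 1, and let L : ℝ → (−∞, ∞] be proper. Then for all θ, ẑ ∈ ℝ^d and all λ ≥ 0: sup_{z ∈ ℝ^d} ( L(⟨θ, z⟩) − λ ‖z − ẑ‖^p ) = sup_{γ ∈ ℝ} ( L(⟨θ, ẑ⟩ + γ ‖θ‖_*) − λ |γ|^p ). -/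
open ENNReal Set

noncomputable section

/-- The dual norm `‖θ‖_* = sup {⟨θ, x⟩ : ‖x‖ ≤ 1}` of a norm `N` on `ℝ^d`. -/
def dualNorm {d : ℕ} (N : (Fin d → ℝ) → ℝ) (θ : Fin d → ℝ) : ℝ :=
  sSup {r : ℝ | ∃ x : Fin d → ℝ, N x ≤ 1 ∧ r = dotp θ x}


lemma dotp_add_right {d : ℕ} (θ x y : Fin d → ℝ) :
    dotp θ (x + y) = dotp θ x + dotp θ y := by
  simp [dotp, mul_add, Finset.sum_add_distrib]

lemma dotp_smul_right {d : ℕ} (θ : Fin d → ℝ) (a : ℝ) (x : Fin d → ℝ) :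
    dotp θ (a • x) = a * dotp θ x := by
  simp [dotp, Finset.mul_sum, mul_left_comm]

lemma dotp_zero_right {d : ℕ} (θ : Fin d → ℝ) : dotp θ 0 = 0 := by simp [dotp]

lemma dotp_neg_right {d : ℕ} (θ x : Fin d → ℝ) : dotp θ (-x) = - dotp θ x := by
  simp [dotp]

lemma dotp_continuous {d : ℕ} (θ : Fin d → ℝ) : Continuous (fun x => dotp θ x) := by
  unfold dotp
  exact continuous_finset_sum _ fun i _ => continuous_const.mul (continuous_apply i)

/-- **Duality for the `c`-transform with norm-power transportation costs.**
For an arbitrary norm `‖·‖` on `ℝ^d`, exponent `p ≥ 1`, and proper `L : ℝ → (−∞, ∞]`,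
`sup_z (L(⟨θ, z⟩) − λ ‖z − ẑ‖^p) = sup_γ (L(⟨θ, ẑ⟩ + γ‖θ‖_*) − λ|γ|^p)`. -/
theorem c_transform_norm_duality {d : ℕ}
    (N : (Fin d → ℝ) → ℝ)
    (hN0 : ∀ x, N x = 0 ↔ x = 0)
    (hNhom : ∀ (a : ℝ) x, N (a • x) = |a| * N x)
    (hNtri : ∀ x y, N (x + y) ≤ N x + N y)
    (p : ℝ) (hp : 1 ≤ p)
    (L : ℝ → EReal)
    (hLproper : (∀ s, L s ≠ ⊥) ∧ (∃ s, L s ≠ ⊤))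
    (θ zhat : Fin d → ℝ) (lam : ℝ) (hlam : 0 ≤ lam) :
    (⨆ z : Fin d → ℝ, L (dotp θ z) - ((lam * N (z - zhat) ^ p : ℝ) : EReal)) =
    (⨆ γ : ℝ, L (dotp θ zhat + γ * dualNorm N θ) - ((lam * |γ| ^ p : ℝ) : EReal)) := by
  classical
  have hp0 : (0:ℝ) ≤ p := le_trans zero_le_one hp
  have hpne : p ≠ 0 := by positivity
  have hN0' : N 0 = 0 := (hN0 0).mpr rfl
  have hNneg : ∀ x, 0 ≤ N x := by
    intro x
    have h1 : N (-x) = N x := by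
      have := hNhom (-1) x; simpa using this
    have h2 : (0:ℝ) ≤ N x + N (-x) := by
      have := hNtri x (-x); simpa [hN0'] using this
    nlinarith [h2, h1]
  -- N is Lipschitz, hence continuous
  set C : ℝ := ∑ i, N (Pi.single i 1) with hC
  have hNle : ∀ x : Fin d → ℝ, N x ≤ C * ‖x‖ := by
    intro x
    have hx : ∑ i, Pi.single i (x i) = x := Finset.univ_sum_single x
    have hsum : N (∑ i, Pi.single i (x i)) ≤ ∑ i, N (Pi.single i (x i)) := by
      classical
      induction (Finset.univ : Finset (Fin d)) using Finset.induction with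
      | empty => simp [hN0']
      | insert _ _ hni ih =>
          rename_i a s
          rw [Finset.sum_insert hni, Finset.sum_insert hni]
          exact le_trans (hNtri _ _) (by linarith)
    have hterm : ∀ i, N (Pi.single i (x i)) ≤ N (Pi.single i 1) * ‖x‖ := by
      intro i
      have : Pi.single i (x i) = (x i) • (Pi.single i 1 : Fin d → ℝ) := by
        ext j; by_cases h : j = i <;> simp [h, Pi.single_apply]
      rw [this, hNhom]
      have hxi : |x i| ≤ ‖x‖ := by
        have := norm_le_pi_norm x i; simpa [Real.norm_eq_abs] using this
      have := mul_le_mul_of_nonneg_right hxi (hNneg (Pi.single i 1))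
      calc |x i| * N (Pi.single i 1) ≤ ‖x‖ * N (Pi.single i 1) :=
            mul_le_mul_of_nonneg_right hxi (hNneg _)
        _ = N (Pi.single i 1) * ‖x‖ := mul_comm _ _
    calc N x = N (∑ i, Pi.single i (x i)) := by rw [hx]
      _ ≤ ∑ i, N (Pi.single i (x i)) := hsum
      _ ≤ ∑ i, N (Pi.single i 1) * ‖x‖ := Finset.sum_le_sum fun i _ => hterm i
      _ = C * ‖x‖ := by rw [hC, Finset.sum_mul]
  have hNcont : Continuous N := by
    apply Metric.continuous_iff.mpr
    intro x ε hε
    have hC0 : 0 ≤ C := Finset.sum_nonneg fun i _ => hNneg _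
    refine ⟨ε / (C + 1), by positivity, fun y hy => ?_⟩
    have h1 : N y ≤ N x + N (y - x) := by
      have := hNtri x (y - x); simpa using this
    have h2 : N x ≤ N y + N (x - y) := by
      have := hNtri y (x - y); simpa using this
    have hxy : N (x - y) = N (y - x) := by
      have := hNhom (-1) (y - x); simpa [neg_sub] using this
    have h3 : |N y - N x| ≤ N (y - x) := by
      rw [abs_sub_le_iff]; constructor <;> [linarith; linarith]
    have h4 : N (y - x) ≤ C * ‖y - x‖ := hNle _
    have h5 : ‖y - x‖ < ε / (C + 1) := by
      rw [← dist_eq_norm]; exact hy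
    have : C * ‖y - x‖ < ε := by
      calc C * ‖y - x‖ ≤ (C + 1) * ‖y - x‖ := by nlinarith [norm_nonneg (y - x)]
        _ < (C + 1) * (ε / (C + 1)) := by
            apply mul_lt_mul_of_pos_left h5; positivity
        _ = ε := by field_simp
    calc dist (N y) (N x) = |N y - N x| := rfl
      _ ≤ N (y - x) := h3
      _ < ε := by linarith
  -- lower bound: ∃ c > 0, ∀ x, c * ‖x‖ ≤ N x
  obtain ⟨c, hc0, hcle⟩ : ∃ c > (0:ℝ), ∀ x, c * ‖x‖ ≤ N x := by
    rcases Nat.eq_zero_or_pos d with hd | hd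
    · refine ⟨1, one_pos, fun x => ?_⟩
      subst hd
      have hx0 : x = 0 := Subsingleton.elim x 0
      rw [hx0, hN0', norm_zero, mul_zero]
    · have hne : (Metric.sphere (0 : Fin d → ℝ) 1).Nonempty := by
        have : (0:ℕ) < d := hd
        refine ⟨Pi.single ⟨0, this⟩ 1, ?_⟩
        simp [Pi.norm_single]
      have hcomp : IsCompact (Metric.sphere (0 : Fin d → ℝ) 1) := isCompact_sphere 0 1
      obtain ⟨x₀, hx₀, hmin⟩ := hcomp.exists_isMinOn hne hNcont.continuousOn
      have hx₀n : ‖x₀‖ = 1 := by simpa using hx₀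
      have hx₀0 : x₀ ≠ 0 := by
        intro h; rw [h] at hx₀n; simp at hx₀n
      have hc0 : 0 < N x₀ := lt_of_le_of_ne (hNneg x₀) (fun h => hx₀0 ((hN0 x₀).mp h.symm))
      refine ⟨N x₀, hc0, fun x => ?_⟩
      rcases eq_or_ne x 0 with rfl | hx
      · simp [hN0']
      · have hnx : 0 < ‖x‖ := norm_pos_iff.mpr hx
        have hmem : ‖x‖⁻¹ • x ∈ Metric.sphere (0 : Fin d → ℝ) 1 := by
          simp [norm_smul, abs_of_pos (inv_pos.mpr hnx), inv_mul_cancel₀ hnx.ne']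
        have h2 : N x₀ ≤ N (‖x‖⁻¹ • x) := hmin hmem
        have heq : N (‖x‖⁻¹ • x) = ‖x‖⁻¹ * N x := by
          rw [hNhom, abs_of_pos (inv_pos.mpr hnx)]
        rw [heq] at h2
        calc N x₀ * ‖x‖ ≤ (‖x‖⁻¹ * N x) * ‖x‖ := by
              exact mul_le_mul_of_nonneg_right h2 hnx.le
          _ = N x := by field_simp
  -- the set defining dualNorm
  set S : Set ℝ := {r : ℝ | ∃ x : Fin d → ℝ, N x ≤ 1 ∧ r = dotp θ x} with hS
  have hSne : S.Nonempty := ⟨0, 0, by simp [hN0', dotp_zero_right]⟩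
  have hSbdd : BddAbove S := by
    refine ⟨(∑ i, |θ i|) / c, ?_⟩
    rintro r ⟨x, hx, rfl⟩
    have hxn : ‖x‖ ≤ 1 / c := by
      have := hcle x
      rw [le_div_iff₀ hc0, mul_comm]; linarith
    have : dotp θ x ≤ (∑ i, |θ i|) * ‖x‖ := by
      unfold dotp
      calc ∑ i, θ i * x i ≤ ∑ i, |θ i| * ‖x‖ := by
            apply Finset.sum_le_sum
            intro i _
            calc θ i * x i ≤ |θ i * x i| := le_abs_self _
              _ = |θ i| * |x i| := abs_mul _ _
              _ ≤ |θ i| * ‖x‖ := by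
                  apply mul_le_mul_of_nonneg_left _ (abs_nonneg _)
                  have := norm_le_pi_norm x i; simpa [Real.norm_eq_abs] using this
        _ = (∑ i, |θ i|) * ‖x‖ := by rw [Finset.sum_mul]
    calc dotp θ x ≤ (∑ i, |θ i|) * ‖x‖ := this
      _ ≤ (∑ i, |θ i|) * (1 / c) := by
          apply mul_le_mul_of_nonneg_left hxn
          exact Finset.sum_nonneg fun i _ => abs_nonneg _
      _ = (∑ i, |θ i|) / c := by ring
  set D : ℝ := dualNorm N θ with hD
  have hDS : D = sSup S := rfl
  have hD0 : 0 ≤ D := le_csSup hSbdd ⟨0, by simp [hN0', dotp_zero_right]⟩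
  -- Cauchy-Schwarz for dual norm
  have hCS : ∀ w : Fin d → ℝ, dotp θ w ≤ D * N w := by
    intro w
    rcases eq_or_ne w 0 with rfl | hw
    · simp [dotp_zero_right, hN0']
    · have hNw : 0 < N w := lt_of_le_of_ne (hNneg w) (fun h => hw ((hN0 w).mp h.symm))
      have hmem : dotp θ ((N w)⁻¹ • w) ∈ S := by
        refine ⟨(N w)⁻¹ • w, ?_, rfl⟩
        rw [hNhom, abs_of_pos (inv_pos.mpr hNw), inv_mul_cancel₀ hNw.ne']
      have h1 : dotp θ ((N w)⁻¹ • w) ≤ D := le_csSup hSbdd hmem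
      rw [dotp_smul_right] at h1
      calc dotp θ w = N w * ((N w)⁻¹ * dotp θ w) := by field_simp
        _ ≤ N w * D := mul_le_mul_of_nonneg_left h1 hNw.le
        _ = D * N w := mul_comm _ _
  have hCSabs : ∀ w : Fin d → ℝ, |dotp θ w| ≤ D * N w := by
    intro w
    rw [abs_le]
    constructor
    · have := hCS (-w)
      rw [dotp_neg_right] at this
      have hNnw : N (-w) = N w := by
        have := hNhom (-1) w; simpa using this
      rw [hNnw] at this; linarith
    · exact hCS w
  -- attainment of the dual norm
  have hKcomp : IsCompact {x : Fin d → ℝ | N x ≤ 1} := by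
    apply IsCompact.of_isClosed_subset (isCompact_closedBall (0 : Fin d → ℝ) (1/c))
    · exact isClosed_le hNcont continuous_const
    · intro x hx
      simp only [Metric.mem_closedBall, dist_zero_right]
      have := hcle x
      rw [le_div_iff₀ hc0, mul_comm]
      have hx' : N x ≤ 1 := hx
      linarith
  obtain ⟨x₀, hx₀, hmax⟩ := hKcomp.exists_isMaxOn ⟨0, by simp [hN0']⟩
      (dotp_continuous θ).continuousOn
  have hx₀1 : N x₀ ≤ 1 := hx₀
  have hDeq : D = dotp θ x₀ := by
    apply le_antisymm
    · apply csSup_le hSne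
      rintro r ⟨x, hx, rfl⟩
      exact hmax hx
    · exact le_csSup hSbdd ⟨x₀, hx₀1, rfl⟩
  -- main argument
  apply le_antisymm
  · apply iSup_le
    intro z
    set w : Fin d → ℝ := z - zhat with hw
    have hzw : dotp θ z = dotp θ zhat + dotp θ w := by
      rw [hw, ← dotp_add_right]; congr 1; abel
    rcases eq_or_lt_of_le hD0 with hD0' | hD0'
    · -- D = 0
      have hdw : dotp θ w = 0 := by
        have h1 := hCSabs w
        rw [← hD0'] at h1
        rw [zero_mul] at h1
        exact abs_eq_zero.mp (le_antisymm h1 (abs_nonneg _))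
      apply le_iSup_of_le 0
      have harg : dotp θ z = dotp θ zhat + 0 * D := by
        rw [hzw, hdw]; ring
      rw [harg]
      apply EReal.sub_le_sub le_rfl
      apply EReal.coe_le_coe_iff.mpr
      have : |(0:ℝ)| ^ p = 0 := by
        simp [Real.zero_rpow hpne]
      rw [this, mul_zero]
      exact mul_nonneg hlam (Real.rpow_nonneg (hNneg _) _)
    · -- D > 0
      apply le_iSup_of_le (dotp θ w / D)
      have harg : dotp θ z = dotp θ zhat + (dotp θ w / D) * D := by
        rw [hzw]; field_simp
      rw [harg]
      apply EReal.sub_le_sub le_rfl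
      apply EReal.coe_le_coe_iff.mpr
      apply mul_le_mul_of_nonneg_left _ hlam
      apply Real.rpow_le_rpow (abs_nonneg _) _ hp0
      rw [abs_div, abs_of_pos hD0', div_le_iff₀ hD0', mul_comm]
      exact hCSabs w
  · apply iSup_le
    intro γ
    apply le_iSup_of_le (zhat + γ • x₀)
    have harg : dotp θ (zhat + γ • x₀) = dotp θ zhat + γ * D := by
      rw [dotp_add_right, dotp_smul_right, hDeq]
    rw [harg]
    apply EReal.sub_le_sub le_rfl
    apply EReal.coe_le_coe_iff.mpr
    apply mul_le_mul_of_nonneg_left _ hlam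
    have h1 : zhat + γ • x₀ - zhat = γ • x₀ := by abel
    rw [h1, hNhom]
    apply Real.rpow_le_rpow (mul_nonneg (abs_nonneg _) (hNneg _)) _ hp0
    calc |γ| * N x₀ ≤ |γ| * 1 := mul_le_mul_of_nonneg_left hx₀1 (abs_nonneg _)
      _ = |γ| := mul_one _
end
end

section
/- Let 𝒵 = ℝ^d, let ‖·‖ be a norm on ℝ^d with dual norm ‖θ‖_* = sup{⟨θ, x⟩ : ‖x‖ ≤ 1}, and let c(z, ẑ) = ‖z − ẑ‖². Fix θ ∈ ℝ^d and ε > 0, and suppose P̂ satisfies ∫ ⟨θ, ẑ⟩² dP̂(ẑ) < ∞ and P̂({ẑ : ⟨θ, ẑ⟩ ≠ 0}) > 0. Then sup_{Q ∈ B_ε(P̂)} ∫ ⟨θ, z⟩² dQ(z) = ( ( ∫ ⟨θ, ẑ⟩² dP̂(ẑ) )^{1/2} + √ε · ‖θ‖_* )². -/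
open MeasureTheory ENNReal Set

noncomputable section

variable {d : ℕ}

lemma dotp_add (θ x y : Fin d → ℝ) : dotp θ (x + y) = dotp θ x + dotp θ y := by
  simp [dotp, mul_add, Finset.sum_add_distrib]

lemma dotp_smul (θ : Fin d → ℝ) (a : ℝ) (x : Fin d → ℝ) : dotp θ (a • x) = a * dotp θ x := by
  simp only [dotp, Pi.smul_apply, smul_eq_mul, Finset.mul_sum]
  exact Finset.sum_congr rfl fun i _ => by ring

lemma dotp_zero (θ : Fin d → ℝ) : dotp θ 0 = 0 := by simp [dotp]

lemma dotp_sub (θ x y : Fin d → ℝ) : dotp θ (x - y) = dotp θ x - dotp θ y := by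
  simp [dotp, mul_sub, Finset.sum_sub_distrib]

lemma continuous_dotp (θ : Fin d → ℝ) : Continuous (dotp θ) := by
  unfold dotp
  exact continuous_finset_sum _ fun i _ => (continuous_const.mul (continuous_apply i))

section Nfacts
variable {N : (Fin d → ℝ) → ℝ}
  (hN0 : ∀ x, N x = 0 ↔ x = 0)
  (hNhom : ∀ (a : ℝ) x, N (a • x) = |a| * N x)
  (hNtri : ∀ x y, N (x + y) ≤ N x + N y)

include hNhom in
lemma N_zero : N 0 = 0 := by
  have := hNhom 0 0; simpa using this

include hNhom hNtri in
lemma N_nonneg (x : Fin d → ℝ) : 0 ≤ N x := by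
  have h := hNtri x (-x)
  have h2 : N (-x) = N x := by
    have := hNhom (-1) x; simpa using this
  have h0 : N 0 = N (x + -x) := by simp
  nlinarith [N_zero (N := N) hNhom, h0 ▸ h]

include hNhom hNtri in
lemma N_sum {ι : Type*} (s : Finset ι) (f : ι → Fin d → ℝ) :
    N (∑ i ∈ s, f i) ≤ ∑ i ∈ s, N (f i) := by
  classical
  induction s using Finset.cons_induction with
  | empty => simp [N_zero (N := N) hNhom]
  | cons a s ha ih =>
    rw [Finset.sum_cons, Finset.sum_cons]
    exact le_trans (hNtri _ _) (by linarith)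

include hNhom hNtri in
lemma N_le_C : ∃ C : ℝ, 0 ≤ C ∧ ∀ x, N x ≤ C * ‖x‖ := by
  classical
  refine ⟨∑ i, N (Pi.single i (1:ℝ) : Fin d → ℝ), Finset.sum_nonneg fun i _ => N_nonneg hNhom hNtri _, fun x => ?_⟩
  have hx : x = ∑ i, x i • (Pi.single i (1:ℝ) : Fin d → ℝ) := by
    funext j
    simp [Pi.single_apply, Finset.sum_apply]
  calc N x ≤ ∑ i, N (x i • (Pi.single i (1:ℝ) : Fin d → ℝ)) := by
        conv_lhs => rw [hx]
        exact N_sum hNhom hNtri _ _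
    _ = ∑ i, |x i| * N (Pi.single i (1:ℝ) : Fin d → ℝ) := by simp [hNhom]
    _ ≤ ∑ i, ‖x‖ * N (Pi.single i (1:ℝ) : Fin d → ℝ) := by
        refine Finset.sum_le_sum fun i _ => ?_
        exact mul_le_mul_of_nonneg_right (by simpa using norm_le_pi_norm x i)
          (N_nonneg hNhom hNtri _)
    _ = (∑ i, N (Pi.single i (1:ℝ) : Fin d → ℝ)) * ‖x‖ := by rw [← Finset.mul_sum, mul_comm]

include hNhom hNtri in
lemma continuous_N : Continuous N := by
  obtain ⟨C, hC0, hC⟩ := N_le_C hNhom hNtri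
  rw [Metric.continuous_iff]
  intro x εx hεx
  refine ⟨εx / (C + 1), by positivity, fun y hy => ?_⟩
  have hNs : ∀ u v : Fin d → ℝ, N u - N v ≤ N (u - v) := by
    intro u v
    have := hNtri (u - v) v
    simpa using this
  have h1 : |N y - N x| ≤ N (y - x) := by
    rw [abs_le]
    constructor
    · have := hNs x y
      have h2 : N (x - y) = N (y - x) := by
        have h := hNhom (-1) (y - x)
        simp only [neg_one_smul, abs_neg, abs_one, one_mul] at h
        rw [← h, neg_sub]
      linarith
    · exact hNs y x
  have h2 : N (y - x) ≤ C * ‖y - x‖ := hC _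
  have h3 : ‖y - x‖ < εx / (C + 1) := by rwa [← dist_eq_norm]
  have : C * ‖y - x‖ < εx := by
    calc C * ‖y - x‖ ≤ (C+1) * ‖y-x‖ := by nlinarith [norm_nonneg (y - x)]
    _ < (C+1) * (εx / (C+1)) := by
        exact mul_lt_mul_of_pos_left h3 (by linarith)
    _ = εx := by field_simp
  calc dist (N y) (N x) = |N y - N x| := rfl
  _ ≤ N (y - x) := h1
  _ < εx := by linarith

end Nfacts

section dual
variable {N : (Fin d → ℝ) → ℝ}
  (hN0 : ∀ x, N x = 0 ↔ x = 0)
  (hNhom : ∀ (a : ℝ) x, N (a • x) = |a| * N x)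
  (hNtri : ∀ x y, N (x + y) ≤ N x + N y)

include hN0 hNhom hNtri in
lemma N_lower {θ : Fin d → ℝ} (hθ : θ ≠ 0) : ∃ c > 0, ∀ x, c * ‖x‖ ≤ N x := by
  have hcomp : IsCompact (Metric.sphere (0 : Fin d → ℝ) 1) := isCompact_sphere 0 1
  have hne : (Metric.sphere (0 : Fin d → ℝ) 1).Nonempty := by
    refine ⟨‖θ‖⁻¹ • θ, ?_⟩
    simp only [Metric.mem_sphere, dist_zero_right, norm_smul, norm_inv, norm_norm]
    rw [inv_mul_cancel₀ (norm_ne_zero_iff.mpr hθ)]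
  obtain ⟨x₀, hx₀, hmin⟩ := hcomp.exists_isMinOn hne (continuous_N hNhom hNtri).continuousOn
  have hx₀ne : x₀ ≠ 0 := by
    intro h
    rw [h] at hx₀
    simp at hx₀
  have hc : 0 < N x₀ := lt_of_le_of_ne (N_nonneg hNhom hNtri _)
    (fun h => hx₀ne ((hN0 x₀).mp h.symm))
  refine ⟨N x₀, hc, fun x => ?_⟩
  rcases eq_or_ne x 0 with rfl | hx
  · simp [N_zero (N := N) hNhom]
  · have hxn : (0:ℝ) < ‖x‖ := norm_pos_iff.mpr hx
    have hu : ‖x‖⁻¹ • x ∈ Metric.sphere (0 : Fin d → ℝ) 1 := by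
      simp only [Metric.mem_sphere, dist_zero_right, norm_smul, norm_inv, norm_norm]
      rw [inv_mul_cancel₀ hxn.ne']
    have := hmin hu
    have hNu : N (‖x‖⁻¹ • x) = ‖x‖⁻¹ * N x := by
      rw [hNhom, abs_of_nonneg (by positivity)]
    have hle : N x₀ ≤ ‖x‖⁻¹ * N x := hNu ▸ this
    calc N x₀ * ‖x‖ ≤ (‖x‖⁻¹ * N x) * ‖x‖ := by nlinarith
    _ = N x := by field_simp

include hN0 hNhom hNtri in
lemma dualNorm_attained {θ : Fin d → ℝ} (hθ : θ ≠ 0) :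
    ∃ xs, N xs ≤ 1 ∧ dualNorm N θ = dotp θ xs ∧ ∀ x, N x ≤ 1 → dotp θ x ≤ dotp θ xs := by
  obtain ⟨c, hc, hcb⟩ := N_lower hN0 hNhom hNtri hθ
  have hclosed : IsClosed {x : Fin d → ℝ | N x ≤ 1} :=
    isClosed_le (continuous_N hNhom hNtri) continuous_const
  have hbdd : Bornology.IsBounded {x : Fin d → ℝ | N x ≤ 1} := by
    rw [isBounded_iff_forall_norm_le]
    refine ⟨1 / c, fun x hx => ?_⟩
    have := hcb x
    rw [le_div_iff₀ hc]
    calc ‖x‖ * c = c * ‖x‖ := mul_comm _ _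
    _ ≤ N x := this
    _ ≤ 1 := hx
  have hcomp : IsCompact {x : Fin d → ℝ | N x ≤ 1} :=
    Metric.isCompact_of_isClosed_isBounded hclosed hbdd
  have hne : {x : Fin d → ℝ | N x ≤ 1}.Nonempty :=
    ⟨0, by simp [N_zero (N := N) hNhom]⟩
  obtain ⟨xs, hxs, hmax⟩ := hcomp.exists_isMaxOn hne (continuous_dotp θ).continuousOn
  have hgr : IsGreatest {r : ℝ | ∃ x : Fin d → ℝ, N x ≤ 1 ∧ r = dotp θ x} (dotp θ xs) := by
    constructor
    · exact ⟨xs, hxs, rfl⟩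
    · rintro r ⟨x, hx, rfl⟩
      exact hmax hx
  exact ⟨xs, hxs, hgr.csSup_eq, fun x hx => hmax hx⟩

include hN0 hNhom hNtri in
lemma dualNorm_nonneg {θ : Fin d → ℝ} (hθ : θ ≠ 0) : 0 ≤ dualNorm N θ := by
  obtain ⟨xs, hxs, heq, hmax⟩ := dualNorm_attained hN0 hNhom hNtri hθ
  rw [heq]
  have := hmax 0 (by simp [N_zero (N := N) hNhom])
  simpa [dotp_zero] using this

include hN0 hNhom hNtri in
lemma abs_dotp_le {θ : Fin d → ℝ} (hθ : θ ≠ 0) (v : Fin d → ℝ) :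
    |dotp θ v| ≤ dualNorm N θ * N v := by
  obtain ⟨xs, hxs, heq, hmax⟩ := dualNorm_attained hN0 hNhom hNtri hθ
  rcases eq_or_ne v 0 with rfl | hv
  · simp [dotp_zero, N_zero (N := N) hNhom]
  · have hNv : 0 < N v := lt_of_le_of_ne (N_nonneg hNhom hNtri _)
      (fun h => hv ((hN0 v).mp h.symm))
    have key : ∀ s : ℝ, |s| = 1 → s * dotp θ v ≤ dualNorm N θ * N v := by
      intro s hs
      have hu : N ((s * (N v)⁻¹) • v) ≤ 1 := by
        rw [hNhom, abs_mul, hs, one_mul, abs_inv, abs_of_pos hNv,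
          inv_mul_cancel₀ hNv.ne']
      have h2 := hmax _ hu
      rw [dotp_smul] at h2
      have h3 : s * (N v)⁻¹ * dotp θ v * N v ≤ dotp θ xs * N v :=
        mul_le_mul_of_nonneg_right h2 hNv.le
      have h4 : s * (N v)⁻¹ * dotp θ v * N v = s * dotp θ v := by
        field_simp
      rw [heq]
      linarith [h4 ▸ h3]
    rcases abs_cases (dotp θ v) with ⟨h, _⟩ | ⟨h, _⟩
    · rw [h]; simpa using key 1 (by norm_num)
    · rw [h]; simpa [neg_mul] using key (-1) (by norm_num)

end dual

lemma ofReal_sq_rpow (x : ℝ) (hx : 0 ≤ x) :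
    ENNReal.ofReal (x ^ 2) = ENNReal.ofReal x ^ (2:ℝ) := by
  have h : x ^ (2:ℝ) = x ^ 2 := by
    rw [show ((2:ℝ)) = ((2:ℕ):ℝ) by norm_num, Real.rpow_natCast]
  rw [← h, ENNReal.ofReal_rpow_of_nonneg hx (by norm_num)]

/-- **Worst-case expectation of the quadratic loss.**
For the quadratic transportation cost `c(z, ẑ) = ‖z − ẑ‖²`, a square-integrable linear form
that does not vanish `P̂`-almost surely, and `ε > 0`, the worst-case second moment equals
`(√(E_P̂[⟨θ, ẑ⟩²]) + √ε ‖θ‖_*)²`. -/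
theorem worst_case_quadratic_loss {d : ℕ}
    (N : (Fin d → ℝ) → ℝ)
    (hN0 : ∀ x, N x = 0 ↔ x = 0)
    (hNhom : ∀ (a : ℝ) x, N (a • x) = |a| * N x)
    (hNtri : ∀ x y, N (x + y) ≤ N x + N y)
    (Phat : ProbabilityMeasure (Fin d → ℝ))
    (θ : Fin d → ℝ)
    (hint : Integrable (fun zhat => (dotp θ zhat) ^ 2) Phat.toMeasure)
    (hpos : 0 < Phat.toMeasure {zhat | dotp θ zhat ≠ 0})
    (ε : ℝ) (hε : 0 < ε) :
    (⨆ Q ∈ ambiguitySet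
        (fun z zhat : Fin d → ℝ => ENNReal.ofReal (N (z - zhat) ^ 2)) Phat ε,
      ∫⁻ z, ENNReal.ofReal ((dotp θ z) ^ 2) ∂Q.toMeasure) =
    ENNReal.ofReal
      ((Real.sqrt (∫ zhat, (dotp θ zhat) ^ 2 ∂Phat.toMeasure) +
        Real.sqrt ε * dualNorm N θ) ^ 2) := by
  classical
  have hθ : θ ≠ 0 := by
    intro h
    subst h
    have : {zhat : Fin d → ℝ | dotp 0 zhat ≠ 0} = ∅ := by
      ext z; simp [dotp]
    rw [this] at hpos
    simp at hpos
  set E := ∫ zhat, (dotp θ zhat) ^ 2 ∂Phat.toMeasure with hEdef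
  have hEnn : 0 ≤ E := integral_nonneg fun z => sq_nonneg _
  have hmdot : Measurable fun z : Fin d → ℝ => ENNReal.ofReal ((dotp θ z) ^ 2) :=
    (((continuous_dotp θ).pow 2).measurable).ennreal_ofReal
  have hlE : ∫⁻ z, ENNReal.ofReal ((dotp θ z) ^ 2) ∂Phat.toMeasure = ENNReal.ofReal E := by
    rw [← ofReal_integral_eq_lintegral_ofReal hint (ae_of_all _ fun z => sq_nonneg _)]
  have hEpos : 0 < E := by
    rcases lt_or_eq_of_le hEnn with h | h
    · exact h
    · exfalso
      have hz := (integral_eq_zero_iff_of_nonneg (fun z => sq_nonneg (dotp θ z)) hint).mp h.symm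
      have hzero : Phat.toMeasure {zhat | dotp θ zhat ≠ 0} = 0 := by
        have hae : ∀ᵐ z ∂Phat.toMeasure, dotp θ z = 0 := by
          filter_upwards [hz] with z hzz
          exact pow_eq_zero_iff (two_ne_zero) |>.mp hzz
        rw [ae_iff] at hae
        exact hae
      rw [hzero] at hpos
      exact lt_irrefl _ hpos
  set sE := Real.sqrt E with hsEdef
  have hsE : 0 < sE := Real.sqrt_pos.mpr hEpos
  set dn := dualNorm N θ with hdndef
  have hdn0 : 0 ≤ dn := dualNorm_nonneg hN0 hNhom hNtri hθ
  obtain ⟨xs, hxs1, hxseq, _⟩ := dualNorm_attained hN0 hNhom hNtri hθ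
  have hNxs0 : 0 ≤ N xs := N_nonneg hNhom hNtri xs
  set cc : (Fin d → ℝ) → (Fin d → ℝ) → ℝ≥0∞ :=
    fun z zhat => ENNReal.ofReal (N (z - zhat) ^ 2) with hccdef
  have hmcost : Measurable fun p : (Fin d → ℝ) × (Fin d → ℝ) => cc p.1 p.2 :=
    ((((continuous_N hNhom hNtri).comp (continuous_fst.sub continuous_snd)).pow 2).measurable).ennreal_ofReal
  apply le_antisymm
  · -- Upper bound
    apply iSup₂_le
    intro Q hQ
    rw [ambiguitySet, Set.mem_setOf_eq] at hQ
    set A := ∫⁻ z, ENNReal.ofReal ((dotp θ z) ^ 2) ∂Q.toMeasure with hAdef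
    have key : ∀ δ : ℝ, 0 < δ → A ≤ ENNReal.ofReal ((sE + dn * Real.sqrt (ε + δ)) ^ 2) := by
      intro δ hδ
      have hlt : OTDiscrepancy cc Q.toMeasure Phat.toMeasure < ENNReal.ofReal (ε + δ) := by
        refine lt_of_le_of_lt hQ ?_
        rw [ENNReal.ofReal_lt_ofReal_iff (by positivity)]
        linarith
      rw [OTDiscrepancy] at hlt
      obtain ⟨π, hπ⟩ := iInf_lt_iff.mp hlt
      obtain ⟨hπc, hcost⟩ := iInf_lt_iff.mp hπ
      obtain ⟨hπ1, hπ2⟩ := hπc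
      set f : ((Fin d → ℝ) × (Fin d → ℝ)) → ℝ≥0∞ :=
        fun p => ENNReal.ofReal |dotp θ p.2| with hfdef
      set g : ((Fin d → ℝ) × (Fin d → ℝ)) → ℝ≥0∞ :=
        fun p => ENNReal.ofReal (dn * N (p.1 - p.2)) with hgdef
      have hfm : Measurable f :=
        (((continuous_dotp θ).comp continuous_snd).abs).measurable.ennreal_ofReal
      have hgm : Measurable g :=
        (continuous_const.mul ((continuous_N hNhom hNtri).comp
          (continuous_fst.sub continuous_snd))).measurable.ennreal_ofReal
      have hA : A = ∫⁻ p, ENNReal.ofReal ((dotp θ p.1) ^ 2) ∂π := by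
        rw [hAdef, ← hπ1, lintegral_map hmdot measurable_fst]
      have hptw : ∀ p : (Fin d → ℝ) × (Fin d → ℝ),
          ENNReal.ofReal ((dotp θ p.1) ^ 2) ≤ ((f + g) p) ^ (2:ℝ) := by
        intro p
        have h1 : |dotp θ p.1| ≤ |dotp θ p.2| + dn * N (p.1 - p.2) := by
          have hd := abs_dotp_le hN0 hNhom hNtri hθ (p.1 - p.2)
          rw [dotp_sub] at hd
          have habs : |dotp θ p.1| ≤ |dotp θ p.2| + |dotp θ p.1 - dotp θ p.2| := by
            have := abs_add_le (dotp θ p.2) (dotp θ p.1 - dotp θ p.2)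
            simpa using this
          rw [hdndef]
          linarith
        have h2 : ENNReal.ofReal ((dotp θ p.1) ^ 2) =
            ENNReal.ofReal |dotp θ p.1| ^ (2:ℝ) := by
          rw [← sq_abs (dotp θ p.1), ofReal_sq_rpow _ (abs_nonneg _)]
        rw [h2]
        apply ENNReal.rpow_le_rpow _ (by norm_num : (0:ℝ) ≤ 2)
        have hNnn : 0 ≤ N (p.1 - p.2) := N_nonneg hNhom hNtri _
        calc ENNReal.ofReal |dotp θ p.1|
            ≤ ENNReal.ofReal (|dotp θ p.2| + dn * N (p.1 - p.2)) :=
              ENNReal.ofReal_le_ofReal h1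
          _ = f p + g p := ENNReal.ofReal_add (abs_nonneg _) (by positivity)
          _ = (f + g) p := rfl
      have hmono : A ≤ ∫⁻ p, ((f + g) p) ^ (2:ℝ) ∂π := by
        rw [hA]; exact lintegral_mono hptw
      have hMink := ENNReal.lintegral_Lp_add_le (μ := π) hfm.aemeasurable hgm.aemeasurable
        (by norm_num : (1:ℝ) ≤ 2)
      have hf2 : ∫⁻ p, f p ^ (2:ℝ) ∂π = ENNReal.ofReal E := by
        have hfp : ∀ p : (Fin d → ℝ) × (Fin d → ℝ),
            f p ^ (2:ℝ) = ENNReal.ofReal ((dotp θ p.2) ^ 2) := by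
          intro p
          rw [hfdef]
          dsimp only
          rw [← sq_abs (dotp θ p.2), ofReal_sq_rpow _ (abs_nonneg _)]
        calc ∫⁻ p, f p ^ (2:ℝ) ∂π
            = ∫⁻ p, ENNReal.ofReal ((dotp θ p.2) ^ 2) ∂π := lintegral_congr hfp
          _ = ∫⁻ z, ENNReal.ofReal ((dotp θ z) ^ 2) ∂Phat.toMeasure := by
              rw [← hπ2, lintegral_map hmdot measurable_snd]
          _ = ENNReal.ofReal E := hlE
      have hg2 : ∫⁻ p, g p ^ (2:ℝ) ∂π ≤ ENNReal.ofReal (dn ^ 2 * (ε + δ)) := by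
        have hgp : ∀ p : (Fin d → ℝ) × (Fin d → ℝ),
            g p ^ (2:ℝ) = ENNReal.ofReal (dn ^ 2) * cc p.1 p.2 := by
          intro p
          have hNnn : 0 ≤ N (p.1 - p.2) := N_nonneg hNhom hNtri _
          rw [hgdef]
          dsimp only
          rw [← ofReal_sq_rpow _ (by positivity), hccdef]
          dsimp only
          rw [← ENNReal.ofReal_mul (by positivity)]
          congr 1
          ring
        calc ∫⁻ p, g p ^ (2:ℝ) ∂π
            = ENNReal.ofReal (dn ^ 2) * ∫⁻ p, cc p.1 p.2 ∂π := by
              rw [lintegral_congr hgp, lintegral_const_mul _ hmcost]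
          _ ≤ ENNReal.ofReal (dn ^ 2) * ENNReal.ofReal (ε + δ) :=
              mul_le_mul_right hcost.le _
          _ = ENNReal.ofReal (dn ^ 2 * (ε + δ)) :=
              (ENNReal.ofReal_mul (by positivity)).symm
      have hhalf : (∫⁻ p, ((f + g) p) ^ (2:ℝ) ∂π) ^ (1/2:ℝ) ≤
          ENNReal.ofReal (sE + dn * Real.sqrt (ε + δ)) := by
        refine le_trans hMink ?_
        rw [hf2]
        have h1 : ENNReal.ofReal E ^ (1/2:ℝ) = ENNReal.ofReal sE := by
          rw [ENNReal.ofReal_rpow_of_nonneg hEnn (by norm_num : (0:ℝ) ≤ 1/2)]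
          congr 1
          rw [hsEdef, Real.sqrt_eq_rpow]
        have h2 : (∫⁻ p, g p ^ (2:ℝ) ∂π) ^ (1/2:ℝ) ≤
            ENNReal.ofReal (dn * Real.sqrt (ε + δ)) := by
          calc (∫⁻ p, g p ^ (2:ℝ) ∂π) ^ (1/2:ℝ)
              ≤ ENNReal.ofReal (dn ^ 2 * (ε + δ)) ^ (1/2:ℝ) :=
                ENNReal.rpow_le_rpow hg2 (by norm_num)
            _ = ENNReal.ofReal ((dn ^ 2 * (ε + δ)) ^ (1/2:ℝ)) :=
                ENNReal.ofReal_rpow_of_nonneg (by positivity) (by norm_num)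
            _ = ENNReal.ofReal (dn * Real.sqrt (ε + δ)) := by
                congr 1
                rw [← Real.sqrt_eq_rpow, Real.sqrt_mul (by positivity), Real.sqrt_sq hdn0]
        calc ENNReal.ofReal E ^ (1/2:ℝ) + (∫⁻ p, g p ^ (2:ℝ) ∂π) ^ (1/2:ℝ)
            ≤ ENNReal.ofReal sE + ENNReal.ofReal (dn * Real.sqrt (ε + δ)) := by
              rw [h1]
              exact add_le_add_right h2 _
          _ = ENNReal.ofReal (sE + dn * Real.sqrt (ε + δ)) :=
              (ENNReal.ofReal_add (by positivity) (by positivity)).symm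
      have h3 : A ^ (1/2:ℝ) ≤ ENNReal.ofReal (sE + dn * Real.sqrt (ε + δ)) :=
        le_trans (ENNReal.rpow_le_rpow hmono (by norm_num)) hhalf
      have h4 : A = (A ^ (1/2:ℝ)) ^ (2:ℝ) := by
        rw [← ENNReal.rpow_mul]
        norm_num
      rw [h4]
      calc (A ^ (1/2:ℝ)) ^ (2:ℝ)
          ≤ ENNReal.ofReal (sE + dn * Real.sqrt (ε + δ)) ^ (2:ℝ) :=
            ENNReal.rpow_le_rpow h3 (by norm_num)
        _ = ENNReal.ofReal ((sE + dn * Real.sqrt (ε + δ)) ^ 2) :=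
            (ofReal_sq_rpow _ (by positivity)).symm
    have htend : Filter.Tendsto
        (fun δ : ℝ => ENNReal.ofReal ((sE + dn * Real.sqrt (ε + δ)) ^ 2))
        (nhdsWithin 0 (Ioi 0)) (nhds (ENNReal.ofReal ((sE + dn * Real.sqrt ε) ^ 2))) := by
      have hc : Continuous fun δ : ℝ =>
          ENNReal.ofReal ((sE + dn * Real.sqrt (ε + δ)) ^ 2) :=
        ENNReal.continuous_ofReal.comp ((continuous_const.add (continuous_const.mul
          (Real.continuous_sqrt.comp (continuous_const.add continuous_id)))).pow 2)
      have h0 := hc.tendsto 0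
      simp only [add_zero] at h0
      exact h0.mono_left nhdsWithin_le_nhds
    have hle : A ≤ ENNReal.ofReal ((sE + dn * Real.sqrt ε) ^ 2) :=
      ge_of_tendsto htend (eventually_nhdsWithin_of_forall fun δ hδ => key δ hδ)
    rw [mul_comm dn (Real.sqrt ε)] at hle
    exact hle
  · -- Lower bound: construct the optimal perturbation
    set T : (Fin d → ℝ) → (Fin d → ℝ) :=
      fun z => z + ((Real.sqrt ε / sE) * dotp θ z) • xs with hTdef
    have hTcont : Continuous T :=
      continuous_id.add (((continuous_const.mul (continuous_dotp θ))).smul continuous_const)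
    have hTmeas : Measurable T := hTcont.measurable
    set Q : ProbabilityMeasure (Fin d → ℝ) :=
      ⟨Phat.toMeasure.map T, Measure.isProbabilityMeasure_map hTmeas.aemeasurable⟩ with hQdef
    have hQto : Q.toMeasure = Phat.toMeasure.map T := rfl
    set π : Measure ((Fin d → ℝ) × (Fin d → ℝ)) :=
      Phat.toMeasure.map (fun z => (T z, z)) with hπdef
    have hπmeas : Measurable fun z : Fin d → ℝ => (T z, z) := hTmeas.prodMk measurable_id
    have hπc : π ∈ couplings Q.toMeasure Phat.toMeasure := by
      constructor
      · rw [hπdef, Measure.map_map measurable_fst hπmeas, hQto]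
        rfl
      · rw [hπdef, Measure.map_map measurable_snd hπmeas]
        have hid : (Prod.snd ∘ fun z : Fin d → ℝ => (T z, z)) = id := rfl
        rw [hid, Measure.map_id]
    have hTz : ∀ z, dotp θ (T z) = (1 + Real.sqrt ε * dn / sE) * dotp θ z := by
      intro z
      rw [hTdef]
      simp only
      rw [dotp_add, dotp_smul, hdndef, hxseq]
      ring
    have hQmem : Q ∈ ambiguitySet cc Phat ε := by
      have hcost : ∫⁻ p, cc p.1 p.2 ∂π ≤ ENNReal.ofReal ε := by
        rw [hπdef, lintegral_map hmcost hπmeas]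
        have hptw : ∀ z, cc (T z) z =
            ENNReal.ofReal (ε / E * N xs ^ 2) * ENNReal.ofReal ((dotp θ z) ^ 2) := by
          intro z
          rw [hccdef]
          simp only
          have : T z - z = ((Real.sqrt ε / sE) * dotp θ z) • xs := by
            rw [hTdef]; simp
          rw [this, hNhom, ← ENNReal.ofReal_mul (by positivity)]
          congr 1
          rw [abs_mul, abs_of_nonneg (by positivity : (0:ℝ) ≤ Real.sqrt ε / sE)]
          have h1 : (Real.sqrt ε / sE) ^ 2 = ε / E := by
            rw [div_pow, Real.sq_sqrt hε.le, hsEdef, Real.sq_sqrt hEpos.le]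
          rw [mul_pow, mul_pow, h1, sq_abs]
          ring
        calc ∫⁻ z, cc (T z) z ∂Phat.toMeasure
            = ∫⁻ z, ENNReal.ofReal (ε / E * N xs ^ 2) * ENNReal.ofReal ((dotp θ z) ^ 2)
              ∂Phat.toMeasure := by
              exact lintegral_congr fun z => hptw z
          _ = ENNReal.ofReal (ε / E * N xs ^ 2) * ENNReal.ofReal E := by
              rw [lintegral_const_mul _ hmdot, hlE]
          _ = ENNReal.ofReal (ε / E * N xs ^ 2 * E) := by
              rw [← ENNReal.ofReal_mul (by positivity)]
          _ ≤ ENNReal.ofReal ε := by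
              apply ENNReal.ofReal_le_ofReal
              have : ε / E * N xs ^ 2 * E = ε * N xs ^ 2 := by
                field_simp
              rw [this]
              have h2 : N xs ^ 2 ≤ 1 := by nlinarith
              nlinarith
      have hinf : OTDiscrepancy cc Q.toMeasure Phat.toMeasure ≤ ∫⁻ p, cc p.1 p.2 ∂π :=
        iInf₂_le π hπc
      exact le_trans hinf hcost
    have hval : ∫⁻ z, ENNReal.ofReal ((dotp θ z) ^ 2) ∂Q.toMeasure =
        ENNReal.ofReal ((sE + Real.sqrt ε * dn) ^ 2) := by
      rw [hQto, lintegral_map hmdot hTmeas]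
      have hptw : ∀ z, ENNReal.ofReal ((dotp θ (T z)) ^ 2) =
          ENNReal.ofReal ((1 + Real.sqrt ε * dn / sE) ^ 2) *
            ENNReal.ofReal ((dotp θ z) ^ 2) := by
        intro z
        rw [hTz z, mul_pow, ENNReal.ofReal_mul (by positivity)]
      calc ∫⁻ z, ENNReal.ofReal ((dotp θ (T z)) ^ 2) ∂Phat.toMeasure
          = ENNReal.ofReal ((1 + Real.sqrt ε * dn / sE) ^ 2) * ENNReal.ofReal E := by
            rw [lintegral_congr fun z => hptw z, lintegral_const_mul _ hmdot, hlE]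
        _ = ENNReal.ofReal ((1 + Real.sqrt ε * dn / sE) ^ 2 * E) := by
            rw [← ENNReal.ofReal_mul (by positivity)]
        _ = ENNReal.ofReal ((sE + Real.sqrt ε * dn) ^ 2) := by
            congr 1
            have hE : sE ^ 2 = E := Real.sq_sqrt hEpos.le
            field_simp
            nlinarith [hsE]
    calc ENNReal.ofReal ((sE + Real.sqrt ε * dn) ^ 2)
        = ∫⁻ z, ENNReal.ofReal ((dotp θ z) ^ 2) ∂Q.toMeasure := hval.symm
      _ ≤ ⨆ Q ∈ ambiguitySet cc Phat ε,
            ∫⁻ z, ENNReal.ofReal ((dotp θ z) ^ 2) ∂Q.toMeasure :=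
          le_iSup₂ (f := fun Q _ => ∫⁻ z, ENNReal.ofReal ((dotp θ z) ^ 2) ∂Q.toMeasure) Q hQmem
end
end
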